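/- arXiv:math/9912232 — 9 statements merged into one kernel-verified Lean document; each statement's English description precedes it below -/
import Mathlib

section
/- Let (V, ω) be a finite-dimensional real symplectic vector space, 𝔤 a finite-dimensional real Lie algebra, ρ : 𝔤 → End(V) a Lie algebra homomorphism such that each ρ(ξ) is infinitesimally symplectic, and J : V → 𝔤* a continuously differentiable map satisfying ⟨DJ(z)·u, ξ⟩ = ω(ρ(ξ)z, u) for all z, u ∈ V, ξ ∈ 𝔤, and the infinitesimal equivariance condition ⟨DJ(z)·(ρ(ζ)z), ξ⟩ = −⟨J(z), [ζ, ξ]⟩ for all z ∈ V, ζ, ξ ∈ 𝔤. Fix m ∈ V, set μ := J(m), 𝔤_m := {ξ ∈ 𝔤 : ρ(ξ)m = 0}, and 𝔤_μ := {ξ ∈ 𝔤 : ⟨μ, [ξ, η]⟩ = 0 for all η}. Choose subspaces 𝔪 with 𝔤_μ = 𝔤_m ⊕ 𝔪 and 𝔮 with 𝔤 = 𝔤_μ ⊕ 𝔮, let P_𝔪 : 𝔤 → 𝔪 be the associated projection, let V₀ ⊆ V be a subspace with ker(DJ(m)) = V₀ ⊕ {ρ(β)m : β ∈ 𝔪},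 and let W ⊆ V be a subspace such that DJ(m) restricts to a linear isomorphism A from W onto the annihilator of 𝔤_m ⊕ 𝔮 in 𝔤*. Define Ψ : 𝔪* × V₀ → V by Ψ(η, v) := m + v + A⁻¹(η ∘ P_𝔪). Then: (SM1) Ψ(0,0) = m; (SM3) DJ(m)·(DΨ(0,0)(δη, δv)) = δη ∘ P_𝔪 for all δη ∈ 𝔪*, δv ∈ V₀; and (SM2) there is a neighborhood U of (0,0) in 𝔪* × V₀ such that for every (η, v) ∈ U one has V = {ρ(ξ)(Ψ(η, v)) : ξ ∈ 𝔪 ⊕ 𝔮} + V₀ + W. -/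
attribute [local instance 100] LieRing.ofAssociativeRing

open Module Submodule

lemma aux_surj_open {V : Type*} [NormedAddCommGroup V] [NormedSpace ℝ V]
    [FiniteDimensional ℝ V] (G : V → (V →L[ℝ] V)) (hG : Continuous G) (m₀ : V)
    (h1 : G m₀ = 1) :
    ∃ ε > 0, ∀ z : V, ‖z - m₀‖ < ε → Function.Surjective (G z) := by
  have hopen : IsOpen {x : V →L[ℝ] V | IsUnit x} := Units.isOpen
  have hpre : IsOpen (G ⁻¹' {x | IsUnit x}) := hopen.preimage hG
  have hm : m₀ ∈ G ⁻¹' {x | IsUnit x} := by simp [Set.mem_preimage, h1]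
  obtain ⟨ε, hε, hball⟩ := Metric.isOpen_iff.mp hpre m₀ hm
  refine ⟨ε, hε, fun z hz => ?_⟩
  have hz' : z ∈ Metric.ball m₀ ε := by rwa [Metric.mem_ball, dist_eq_norm]
  obtain ⟨u, hu⟩ := hball hz'
  intro y
  refine ⟨(↑u⁻¹ : V →L[ℝ] V) y, ?_⟩
  have h2 : (G z) ((↑u⁻¹ : V →L[ℝ] V) y) = ((G z) * ↑u⁻¹) y := rfl
  rw [h2, ← hu, u.mul_inv]
  rfl

set_option maxHeartbeats 1000000 in
/-- Construction of a slice mapping (Proposition 2.2 of the paper, in the linear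
category): with `Ψ(η, v) := m₀ + v + A⁻¹(η ∘ P_𝔪)` one has (SM1) `Ψ(0,0) = m₀`,
(SM3) `DJ(m₀)·(DΨ(0,0)(δη, δv)) = δη ∘ P_𝔪`, and (SM2) near the origin
`V = (𝔪 ⊕ 𝔮)·Ψ(η,v) + V₀ + W`. -/
theorem stmt_1 {V g : Type*}
    [NormedAddCommGroup V] [NormedSpace ℝ V] [FiniteDimensional ℝ V]
    [LieRing g] [LieAlgebra ℝ g] [FiniteDimensional ℝ g]
    (ω : V →ₗ[ℝ] V →ₗ[ℝ] ℝ)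
    (halt : ∀ v : V, ω v v = 0)
    (hnondeg : ∀ v : V, (∀ u : V, ω v u = 0) → v = 0)
    (ρ : g →ₗ⁅ℝ⁆ Module.End ℝ V)
    (hinfsymp : ∀ (ξ : g) (u w : V), ω (ρ ξ u) w + ω u (ρ ξ w) = 0)
    (J : V → Module.Dual ℝ g)
    (hJC1 : ∀ ξ : g, ContDiff ℝ 1 fun z : V => J z ξ)
    (hJmom : ∀ (z u : V) (ξ : g), fderiv ℝ (fun w : V => J w ξ) z u = ω (ρ ξ z) u)
    (hJequiv : ∀ (z : V) (ζ ξ : g),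
      fderiv ℝ (fun w : V => J w ξ) z (ρ ζ z) = - J z ⁅ζ, ξ⁆)
    (m₀ : V)
    (gm gμ mm qq : Submodule ℝ g)
    (hgm : ∀ ξ : g, ξ ∈ gm ↔ ρ ξ m₀ = 0)
    (hgμ : ∀ ξ : g, ξ ∈ gμ ↔ ∀ η : g, J m₀ ⁅ξ, η⁆ = 0)
    (hmm₁ : Disjoint gm mm) (hmm₂ : gm ⊔ mm = gμ)
    (hqq : IsCompl gμ qq)
    (P : g →ₗ[ℝ] mm)
    (hP₁ : ∀ x : g, x ∈ mm → (P x : g) = x)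
    (hP₂ : ∀ x : g, x ∈ gm → P x = 0)
    (hP₃ : ∀ x : g, x ∈ qq → P x = 0)
    (V₀ orb W : Submodule ℝ V)
    (horb : ∀ u : V, u ∈ orb ↔ ∃ β ∈ mm, u = ρ β m₀)
    (hdis : Disjoint V₀ orb)
    (hker : ∀ u : V,
      (∀ ξ : g, fderiv ℝ (fun z : V => J z ξ) m₀ u = 0) ↔ u ∈ V₀ ⊔ orb)
    (A : W ≃ₗ[ℝ] ((gm ⊔ qq).dualAnnihilator : Submodule ℝ (Module.Dual ℝ g)))
    (hA : ∀ (w : W) (ξ : g),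
      (A w : Module.Dual ℝ g) ξ = fderiv ℝ (fun z : V => J z ξ) m₀ (w : V))
    (hPann : ∀ η : Module.Dual ℝ mm, η.comp P ∈ (gm ⊔ qq).dualAnnihilator)
    (Ψ : Module.Dual ℝ mm × V₀ → V)
    (hΨ : ∀ (η : Module.Dual ℝ mm) (v : V₀),
      Ψ (η, v) = m₀ + (v : V) + ((A.symm ⟨η.comp P, hPann η⟩ : W) : V)) :
    -- (SM1)
    Ψ (0, 0) = m₀ ∧
    -- (SM3): `DΨ(0,0)(δη, δv) = δv + A⁻¹(δη ∘ P_𝔪)` since `Ψ` is affine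
    (∀ (δη : Module.Dual ℝ mm) (δv : V₀) (ξ : g),
      fderiv ℝ (fun z : V => J z ξ) m₀
          ((δv : V) + ((A.symm ⟨δη.comp P, hPann δη⟩ : W) : V)) =
        δη (P ξ)) ∧
    -- (SM2)
    (∃ ε > 0, ∀ (η : Module.Dual ℝ mm) (v : V₀),
      ‖(v : V) + ((A.symm ⟨η.comp P, hPann η⟩ : W) : V)‖ < ε →
      ∀ u : V, ∃ ζ ∈ mm ⊔ qq, ∃ v₀ ∈ V₀, ∃ w ∈ W,
        u = ρ ζ (Ψ (η, v)) + v₀ + w) := by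
  classical
  -- the evaluation map ξ ↦ ρ ξ m₀
  set E : g →ₗ[ℝ] V := ρ.toLinearMap.flip m₀ with hEdef
  -- the derivative DJ(m₀) as a linear map
  set D : V →ₗ[ℝ] Module.Dual ℝ g := (ω.comp E).flip with hDdef
  have hD : ∀ (u : V) (ξ : g), fderiv ℝ (fun z : V => J z ξ) m₀ u = D u ξ := by
    intro u ξ; rw [hJmom m₀ u ξ]; rfl
  have hkerD : LinearMap.ker D = V₀ ⊔ orb := by
    ext u
    rw [LinearMap.mem_ker, ← hker u]
    constructor
    · intro h ξ; rw [hD, h]; rfl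
    · intro h; ext ξ; rw [← hD]; exact h ξ
  set Dρ : g →ₗ[ℝ] Module.Dual ℝ g := D.comp E with hDρdef
  have hDρ : ∀ ξ η : g, Dρ ξ η = - J m₀ ⁅ξ, η⁆ := by
    intro ξ η
    have h := hJequiv m₀ ξ η
    rw [hD (ρ ξ m₀) η] at h
    exact h
  have hgmμ : gm ≤ gμ := hmm₂ ▸ le_sup_left
  have hdis_gmqq : Disjoint gm qq := hqq.disjoint.mono_left hgmμ
  set Q : Submodule ℝ (Module.Dual ℝ g) := Submodule.map Dρ qq with hQdef
  have hQμ : Q ≤ gμ.dualAnnihilator := by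
    rintro φ ⟨ξ, hξ, rfl⟩
    rw [Submodule.mem_dualAnnihilator]
    intro η hη
    have h1 : J m₀ ⁅η, ξ⁆ = 0 := (hgμ η).mp hη ξ
    rw [hDρ, ← lie_skew ξ η, map_neg, h1, neg_zero, neg_zero]
  -- finrank of Q
  have hQrank : finrank ℝ Q = finrank ℝ qq := by
    have hcomp : LinearMap.range (Dρ.comp qq.subtype) = Q := by
      rw [LinearMap.range_comp, Submodule.range_subtype]
    have hinj : Function.Injective (Dρ.comp qq.subtype) := by
      rw [← LinearMap.ker_eq_bot]
      ext x
      simp only [LinearMap.mem_ker, Submodule.mem_bot, LinearMap.comp_apply,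
        Submodule.coe_subtype]
      constructor
      · intro h0
        have hxμ : (x : g) ∈ gμ := by
          rw [hgμ]
          intro η
          have h2 : Dρ (x : g) η = 0 := by rw [h0]; rfl
          rw [hDρ] at h2
          simpa [neg_eq_zero] using h2
        have : (x : g) ∈ gμ ⊓ qq := ⟨hxμ, x.2⟩
        rw [hqq.disjoint.eq_bot] at this
        exact Subtype.ext (by simpa using this)
      · intro h; rw [h]; simp
    rw [← hcomp, LinearMap.finrank_range_of_inj hinj]
  -- finrank of annihilators
  have hann : ∀ U : Submodule ℝ g, finrank ℝ U.dualAnnihilator + finrank ℝ U = finrank ℝ g := by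
    intro U
    rw [← LinearEquiv.finrank_eq (Subspace.quotEquivAnnihilator U)]
    exact Submodule.finrank_quotient_add_finrank U
  have htop : (gm ⊔ qq) ⊔ gμ = ⊤ := by
    rw [eq_top_iff]
    calc (⊤ : Submodule ℝ g) = gμ ⊔ qq := (codisjoint_iff.mp hqq.codisjoint).symm
      _ ≤ (gm ⊔ qq) ⊔ gμ := sup_le le_sup_right (le_sup_of_le_left le_sup_right)
  have hannGQ_disj : Disjoint ((gm ⊔ qq).dualAnnihilator) Q := by
    refine Disjoint.mono_right hQμ ?_
    rw [disjoint_iff, ← Submodule.dualAnnihilator_sup_eq, htop, Submodule.dualAnnihilator_top]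
  have hgmqq_rank : finrank ℝ ↥(gm ⊔ qq) = finrank ℝ gm + finrank ℝ qq := by
    have h := Submodule.finrank_sup_add_finrank_inf_eq gm qq
    rw [hdis_gmqq.eq_bot, finrank_bot] at h
    omega
  have hle : (gm ⊔ qq).dualAnnihilator ⊔ Q ≤ gm.dualAnnihilator :=
    sup_le (Submodule.dualAnnihilator_anti le_sup_left)
      (le_trans hQμ (Submodule.dualAnnihilator_anti hgmμ))
  have hEq : (gm ⊔ qq).dualAnnihilator ⊔ Q = gm.dualAnnihilator := by
    apply Submodule.eq_of_le_of_finrank_le hle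
    have h3 : finrank ℝ ↥((gm ⊔ qq).dualAnnihilator ⊔ Q) =
        finrank ℝ ((gm ⊔ qq).dualAnnihilator) + finrank ℝ Q := by
      have h := Submodule.finrank_sup_add_finrank_inf_eq ((gm ⊔ qq).dualAnnihilator) Q
      rw [hannGQ_disj.eq_bot, finrank_bot] at h
      omega
    have h1 := hann gm
    have h2 := hann (gm ⊔ qq)
    rw [h3, hQrank]
    omega
  -- surjectivity of the decomposition at m₀
  have hS : ∀ u : V, ∃ ζ ∈ mm ⊔ qq, ∃ v₀ ∈ V₀, ∃ w ∈ W, u = ρ ζ m₀ + v₀ + w := by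
    intro u
    have hDu : D u ∈ gm.dualAnnihilator := by
      rw [Submodule.mem_dualAnnihilator]
      intro ξ hξ
      show ω (ρ ξ m₀) u = 0
      rw [(hgm ξ).mp hξ]
      simp
    rw [← hEq] at hDu
    obtain ⟨φ, hφ, ψ, hψ, hsum⟩ := Submodule.mem_sup.mp hDu
    obtain ⟨q, hq, rfl⟩ := hψ
    set w : W := A.symm ⟨φ, hφ⟩ with hw
    have hφw : φ = D (w : V) := by
      have h1 : ((A w : (gm ⊔ qq).dualAnnihilator) : Module.Dual ℝ g) = φ := by
        rw [hw, A.apply_symm_apply]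
      ext ξ
      rw [← h1, hA w ξ, hD]
    have hkermem : u - (w : V) - ρ q m₀ ∈ LinearMap.ker D := by
      rw [LinearMap.mem_ker]
      have hq' : D (ρ q m₀) = Dρ q := rfl
      rw [map_sub, map_sub, hq', ← hsum, hφw]
      abel
    rw [hkerD] at hkermem
    obtain ⟨v₀, hv₀, o, ho, hvo⟩ := Submodule.mem_sup.mp hkermem
    obtain ⟨β, hβ, rfl⟩ := (horb o).mp ho
    refine ⟨β + q, add_mem (Submodule.mem_sup_left hβ) (Submodule.mem_sup_right hq),
      v₀, hv₀, w, w.2, ?_⟩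
    have hadd : ρ (β + q) m₀ = ρ β m₀ + ρ q m₀ := by rw [map_add]; rfl
    rw [hadd]
    have h2 : u = (v₀ + ρ β m₀) + ((w : V) + ρ q m₀) := by rw [hvo]; abel
    rw [h2]; abel
  -- build the continuous family of endomorphisms
  set b : Basis (Fin (finrank ℝ V)) ℝ V := finBasis ℝ V with hb
  choose ζf hζmem vf hvmem wf hwmem heq using fun i => hS (b i)
  set f : V → (V →ₗ[ℝ] V) := fun z => b.constr ℝ (fun i => ρ (ζf i) z + (vf i + wf i))
    with hf
  set G : V → (V →L[ℝ] V) := fun z => LinearMap.toContinuousLinearMap (f z) with hG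
  have hG1 : G m₀ = 1 := by
    have hfm : f m₀ = LinearMap.id := by
      refine b.ext fun i => ?_
      rw [hf]
      simp only [Basis.constr_basis, LinearMap.id_apply]
      rw [heq i]; abel
    ext x
    show (f m₀) x = x
    rw [hfm]; rfl
  have hGcont : Continuous G := by
    set Tlin : V →ₗ[ℝ] (V →L[ℝ] V) :=
      (LinearMap.toContinuousLinearMap.toLinearMap).comp
        (((b.constr ℝ).toLinearMap).comp
          (LinearMap.pi fun i => (ρ (ζf i) : V →ₗ[ℝ] V))) with hT
    set C : V →L[ℝ] V := LinearMap.toContinuousLinearMap (b.constr ℝ (fun i => vf i + wf i))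
      with hC
    have hdecomp : G = fun z => Tlin z + C := by
      funext z
      show LinearMap.toContinuousLinearMap (f z) = _
      rw [hT, hC]
      simp only [LinearMap.comp_apply, LinearEquiv.coe_toLinearMap]
      rw [← map_add]
      congr 1
      have : (LinearMap.pi fun i => (ρ (ζf i) : V →ₗ[ℝ] V)) z = fun i => ρ (ζf i) z := rfl
      rw [this, ← map_add]
      congr 1
    rw [hdecomp]
    exact (Tlin.continuous_of_finiteDimensional).add continuous_const
  obtain ⟨ε, hε, hsurj⟩ := aux_surj_open G hGcont m₀ hG1
  refine ⟨?_, ?_, ?_⟩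
  · -- SM1
    rw [hΨ 0 0]
    have h0 : (⟨(0 : Module.Dual ℝ mm).comp P, hPann 0⟩ :
        ((gm ⊔ qq).dualAnnihilator : Submodule ℝ (Module.Dual ℝ g))) = 0 :=
      Subtype.ext (LinearMap.zero_comp P)
    rw [h0, map_zero]
    simp
  · -- SM3
    intro δη δv ξ
    rw [map_add]
    have h1 : fderiv ℝ (fun z : V => J z ξ) m₀ (δv : V) = 0 :=
      (hker _).mpr (Submodule.mem_sup_left δv.2) ξ
    have h2 : fderiv ℝ (fun z : V => J z ξ) m₀
        ((A.symm ⟨δη.comp P, hPann δη⟩ : W) : V) = δη (P ξ) := by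
      rw [← hA, A.apply_symm_apply]
      rfl
    rw [h1, h2, zero_add]
  · -- SM2
    refine ⟨ε, hε, ?_⟩
    intro η v hnorm u
    have hz : ‖Ψ (η, v) - m₀‖ < ε := by
      rw [hΨ]
      have h3 : m₀ + (v : V) + ((A.symm ⟨η.comp P, hPann η⟩ : W) : V) - m₀ =
          (v : V) + ((A.symm ⟨η.comp P, hPann η⟩ : W) : V) := by abel
      rw [h3]
      exact hnorm
    obtain ⟨x, hx⟩ := hsurj (Ψ (η, v)) hz u
    have hx' : (b.constr ℝ fun i => ρ (ζf i) (Ψ (η, v)) + (vf i + wf i)) x = u := by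
      rw [← hx]
      simp only [hG, hf, LinearMap.coe_toContinuousLinearMap']
    have hmem : u ∈ LinearMap.range
        (b.constr ℝ fun i => ρ (ζf i) (Ψ (η, v)) + (vf i + wf i)) := ⟨x, hx'⟩
    rw [b.constr_range ℝ] at hmem
    have hspan : Submodule.span ℝ
        (Set.range fun i => ρ (ζf i) (Ψ (η, v)) + (vf i + wf i)) ≤
        Submodule.map (ρ.toLinearMap.flip (Ψ (η, v))) (mm ⊔ qq) ⊔ (V₀ ⊔ W) := by
      rw [Submodule.span_le]
      rintro _ ⟨i, rfl⟩
      exact Submodule.mem_sup.mpr ⟨ρ (ζf i) (Ψ (η, v)), ⟨ζf i, hζmem i, rfl⟩,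
        vf i + wf i, add_mem (Submodule.mem_sup_left (hvmem i))
          (Submodule.mem_sup_right (hwmem i)), rfl⟩
    have humem := hspan hmem
    obtain ⟨a, ha, c, hc, hsum⟩ := Submodule.mem_sup.mp humem
    obtain ⟨ζ, hζ, rfl⟩ := ha
    obtain ⟨v₀, hv₀, w, hw, rfl⟩ := Submodule.mem_sup.mp hc
    refine ⟨ζ, hζ, v₀, hv₀, w, hw, ?_⟩
    rw [← hsum]
    show ρ.toLinearMap.flip (Ψ (η, v)) ζ + (v₀ + w) = ρ ζ (Ψ (η, v)) + v₀ + w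
    rw [add_assoc]
    rfl
end

section
/- Let (V, ω) be a finite-dimensional real symplectic vector space, 𝔤 a finite-dimensional real Lie algebra, ρ : 𝔤 → End(V) a Lie algebra homomorphism by infinitesimally symplectic operators, and J : V → 𝔤* continuously differentiable with ⟨DJ(z)·(ρ(ζ)z), ξ⟩ = −⟨J(z), [ζ, ξ]⟩ for all z ∈ V, ζ, ξ ∈ 𝔤. Let h : V → ℝ be continuously differentiable and infinitesimally invariant: Dh(z)·(ρ(ζ)z) = 0 for all z ∈ V, ζ ∈ 𝔤. Let 𝔪 and 𝔮 be subspaces of 𝔤, let 𝔪* × V₀ be a product of finite-dimensional real vector spaces, and let Ψ : 𝔪* × V₀ → V be a differentiable map. Fix ξ ∈ 𝔤 and a point (η, v) ∈ 𝔪* × V₀ at which the decomposition V = {ρ(ζ)(Ψ(η, v)) : ζ ∈ 𝔪 ⊕ 𝔮} + range(DΨ(η, v)) holds. Set H := h ∘ Ψ and j := J ∘ Ψ. Then D(h − ⟨J(·), ξ⟩)(Ψ(η, v)) = 0 if and only if all four of the following conditions hold: (RE1) ⟨j(η, v), [ξ, γ]⟩ = 0 for all γ ∈ 𝔮; (RE2)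 ⟨j(η, v), [ξ, β]⟩ = 0 for all β ∈ 𝔪; (RE3) D(H − ⟨j(·), ξ⟩)(η, v)·(δη, 0) = 0 for all δη ∈ 𝔪*; (RE4) D(H − ⟨j(·), ξ⟩)(η, v)·(0, δv) = 0 for all δv ∈ V₀. -/
attribute [local instance 100] LieRing.ofAssociativeRing

/-- Splitting of the relative equilibrium (critical point) equation along a slice
mapping: at a point where `V = (𝔪 ⊕ 𝔮)·Ψ(η,v) + range DΨ(η,v)`, the critical point equation
`D(h − J^ξ)(Ψ(η,v)) = 0` is equivalent to the four conditions (RE1)–(RE4). -/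
theorem stmt_2 {V g M' V₀ : Type*}
    [NormedAddCommGroup V] [NormedSpace ℝ V] [FiniteDimensional ℝ V]
    [LieRing g] [LieAlgebra ℝ g] [FiniteDimensional ℝ g]
    [NormedAddCommGroup M'] [NormedSpace ℝ M'] [FiniteDimensional ℝ M']
    [NormedAddCommGroup V₀] [NormedSpace ℝ V₀] [FiniteDimensional ℝ V₀]
    (ω : V →ₗ[ℝ] V →ₗ[ℝ] ℝ)
    (halt : ∀ v : V, ω v v = 0)
    (hnondeg : ∀ v : V, (∀ u : V, ω v u = 0) → v = 0)
    (ρ : g →ₗ⁅ℝ⁆ Module.End ℝ V)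
    (hinfsymp : ∀ (ζ : g) (u w : V), ω (ρ ζ u) w + ω u (ρ ζ w) = 0)
    (J : V → Module.Dual ℝ g)
    (hJC1 : ∀ ξ : g, ContDiff ℝ 1 fun z : V => J z ξ)
    (hJequiv : ∀ (z : V) (ζ ξ : g),
      fderiv ℝ (fun w : V => J w ξ) z (ρ ζ z) = - J z ⁅ζ, ξ⁆)
    (h : V → ℝ) (hhC1 : ContDiff ℝ 1 h)
    (hhinv : ∀ (z : V) (ζ : g), fderiv ℝ h z (ρ ζ z) = 0)
    (m q : Submodule ℝ g)
    (Ψ : M' × V₀ → V) (hΨdiff : Differentiable ℝ Ψ)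
    (ξ : g) (η : M') (v : V₀)
    (hdecomp : ∀ u : V, ∃ ζ ∈ m ⊔ q, ∃ p : M' × V₀,
      u = ρ ζ (Ψ (η, v)) + fderiv ℝ Ψ (η, v) p) :
    fderiv ℝ (fun z : V => h z - J z ξ) (Ψ (η, v)) = 0 ↔
      ((∀ γ ∈ q, J (Ψ (η, v)) ⁅ξ, γ⁆ = 0) ∧
       (∀ β ∈ m, J (Ψ (η, v)) ⁅ξ, β⁆ = 0) ∧
       (∀ δη : M',
         fderiv ℝ (fun p : M' × V₀ => h (Ψ p) - J (Ψ p) ξ) (η, v) (δη, 0) = 0) ∧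
       (∀ δv : V₀,
         fderiv ℝ (fun p : M' × V₀ => h (Ψ p) - J (Ψ p) ξ) (η, v) (0, δv) = 0)) := by
  set z0 := Ψ (η, v) with hz0
  have hhd : Differentiable ℝ h := hhC1.differentiable one_ne_zero
  have hJd : Differentiable ℝ (fun z : V => J z ξ) := (hJC1 ξ).differentiable one_ne_zero
  have hFd : Differentiable ℝ (fun z : V => h z - J z ξ) := hhd.sub hJd
  set L := fderiv ℝ (fun z : V => h z - J z ξ) z0 with hL
  have hLρ : ∀ ζ : g, L (ρ ζ z0) = J z0 ⁅ζ, ξ⁆ := by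
    intro ζ
    have hsub : L = fderiv ℝ h z0 - fderiv ℝ (fun z : V => J z ξ) z0 := by
      rw [hL, fderiv_fun_sub (hhd z0) (hJd z0)]
    rw [hsub]
    simp [hhinv z0 ζ, hJequiv z0 ζ ξ]
  have hskew : ∀ ζ : g, J z0 ⁅ζ, ξ⁆ = - J z0 ⁅ξ, ζ⁆ := by
    intro ζ
    rw [← lie_skew ζ ξ, map_neg]
  have hcomp : fderiv ℝ (fun p : M' × V₀ => h (Ψ p) - J (Ψ p) ξ) (η, v)
      = L.comp (fderiv ℝ Ψ (η, v)) := by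
    rw [hL]
    have := fderiv_comp (𝕜 := ℝ) (η, v) (hFd (Ψ (η, v))) (hΨdiff (η, v))
    exact this
  constructor
  · intro h0
    refine ⟨?_, ?_, ?_, ?_⟩
    · intro γ _
      have := hLρ γ
      rw [h0] at this
      simp only [ContinuousLinearMap.zero_apply] at this
      rw [hskew γ] at this
      linarith [this]
    · intro β _
      have := hLρ β
      rw [h0] at this
      simp only [ContinuousLinearMap.zero_apply] at this
      rw [hskew β] at this
      linarith [this]
    · intro δη
      rw [hcomp, h0]; simp
    · intro δv
      rw [hcomp, h0]; simp
  · rintro ⟨h1, h2, h3, h4⟩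
    ext u
    obtain ⟨ζ, hζ, p, hu⟩ := hdecomp u
    obtain ⟨β, hβ, γ, hγ, rfl⟩ := Submodule.mem_sup.1 hζ
    have hρ : (ρ (β + γ)) z0 = ρ β z0 + ρ γ z0 := by
      rw [map_add]; rfl
    have hDp : L (fderiv ℝ Ψ (η, v) p) = 0 := by
      have : L (fderiv ℝ Ψ (η, v) p)
          = fderiv ℝ (fun p : M' × V₀ => h (Ψ p) - J (Ψ p) ξ) (η, v) p := by
        rw [hcomp]; rfl
      rw [this]
      have hp : p = ((p.1, 0) : M' × V₀) + (0, p.2) := by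
        ext <;> simp
      rw [hp, map_add, h3 p.1, h4 p.2, add_zero]
    have hβ0 : L (ρ β z0) = 0 := by
      rw [hLρ β, hskew β, h2 β hβ, neg_zero]
    have hγ0 : L (ρ γ z0) = 0 := by
      rw [hLρ γ, hskew γ, h1 γ hγ, neg_zero]
    rw [hu, map_add, hρ, map_add, hβ0, hγ0, hDp]
    simp
end

section
/- Let V be a finite-dimensional real vector space, 𝔤 a finite-dimensional real Lie algebra, and ρ : 𝔤 → End(V) a linear map. Let h : V → ℝ be differentiable with Dh(z)·(ρ(ζ)z) = 0 for all z ∈ V and ζ ∈ 𝔤 (infinitesimal invariance), and let J : V → 𝔤* be differentiable with ⟨DJ(z)·(ρ(ζ)z), ξ⟩ = −⟨J(z), [ζ, ξ]⟩ for all z ∈ V and ζ, ξ ∈ 𝔤 (infinitesimal equivariance). If z₀ ∈ V and ξ ∈ 𝔤 satisfy D(h − ⟨J(·), ξ⟩)(z₀) = 0, then ⟨J(z₀), [ξ, ζ]⟩ = 0 for all ζ ∈ 𝔤, i.e. the momentum value J(z₀) is infinitesimally fixed by the generator ξ. -/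
/-- If `z₀` is a critical point of the augmented Hamiltonian `h − ⟨J(·), ξ⟩` of an
infinitesimally invariant Hamiltonian `h` with infinitesimally equivariant momentum map `J`,
then the momentum value `J(z₀)` is infinitesimally fixed by the generator `ξ`. -/
theorem stmt_6 {V g : Type*}
    [NormedAddCommGroup V] [NormedSpace ℝ V] [FiniteDimensional ℝ V]
    [LieRing g] [LieAlgebra ℝ g] [FiniteDimensional ℝ g]
    (ρ : g →ₗ[ℝ] V →ₗ[ℝ] V)
    (h : V → ℝ) (hdiff : Differentiable ℝ h)
    (hinv : ∀ (z : V) (ζ : g), fderiv ℝ h z (ρ ζ z) = 0)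
    (J : V → Module.Dual ℝ g)
    (hJdiff : ∀ ξ : g, Differentiable ℝ fun z : V => J z ξ)
    (hJequiv : ∀ (z : V) (ζ ξ : g),
      fderiv ℝ (fun w : V => J w ξ) z (ρ ζ z) = - J z ⁅ζ, ξ⁆)
    (z₀ : V) (ξ : g)
    (hcrit : fderiv ℝ (fun z : V => h z - J z ξ) z₀ = 0) :
    ∀ ζ : g, J z₀ ⁅ξ, ζ⁆ = 0 := by
  intro ζ
  have hsub : fderiv ℝ (fun z : V => h z - J z ξ) z₀
      = fderiv ℝ h z₀ - fderiv ℝ (fun z : V => J z ξ) z₀ :=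
    fderiv_sub (hdiff z₀) (hJdiff ξ z₀)
  have key : fderiv ℝ (fun z : V => J z ξ) z₀ (ρ ζ z₀) = 0 := by
    have := congrArg (fun L => L (ρ ζ z₀)) (hsub.symm.trans hcrit)
    simp only [ContinuousLinearMap.sub_apply, ContinuousLinearMap.zero_apply] at this
    have h0 := hinv z₀ ζ
    linarith
  have := hJequiv z₀ ζ ξ
  rw [key] at this
  have : J z₀ ⁅ζ, ξ⁆ = 0 := by linarith
  rw [← lie_skew, map_neg, this, neg_zero]
end

section
/- Let V be a finite-dimensional real inner product space, W a finite-dimensional real normed vector space, and f : V × W → ℝ twice continuously differentiable. Let L : V → V be the self-adjoint operator representing the Hessian of f in the V-variable at (0,0), i.e. ⟨L v, w⟩ = D²f(0,0)((v,0),(w,0)) for all v, w ∈ V; set V₀ := ker L and let P : V → V denote the orthogonal projection onto V₀. For α ∈ W let F(v, α) ∈ V denote the gradient of f(·, α) at v. Suppose U is an open neighborhood of (0,0) in V₀ × W and v₁ : U → V₀^⊥ is a differentiable map such that (id − P)(F(v₀ + v₁(v₀, α), α)) = 0 for all (v₀, α) ∈ U. Define g(v₀, α) := f(v₀ + v₁(v₀,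 α), α) and B(v₀, α) := P(F(v₀ + v₁(v₀, α), α)). Then for every (v₀, α) ∈ U and every w ∈ V₀, ⟨B(v₀, α), w⟩ equals the derivative of g(·, α) at v₀ in the direction w; that is, B is the V₀-gradient of g. -/
/-- After Lyapunov–Schmidt reduction of the gradient equation `F(v, α) = 0`,
the bifurcation map `B(v₀, α) := P F(v₀ + v₁(v₀, α), α)` is the `V₀`-gradient of
`g(v₀, α) := f(v₀ + v₁(v₀, α), α)`. -/
theorem stmt_7 {V W : Type*}
    [NormedAddCommGroup V] [InnerProductSpace ℝ V] [FiniteDimensional ℝ V]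
    [NormedAddCommGroup W] [NormedSpace ℝ W] [FiniteDimensional ℝ W]
    (f : V × W → ℝ) (hf : ContDiff ℝ 2 f)
    (L : V →ₗ[ℝ] V)
    (hL : ∀ v w : V,
      (inner ℝ (L v) w : ℝ) = fderiv ℝ (fderiv ℝ f) (0, 0) (v, 0) (w, 0))
    (hLsa : ∀ v w : V, (inner ℝ (L v) w : ℝ) = (inner ℝ v (L w) : ℝ))
    (P : V →ₗ[ℝ] V)
    (hP₁ : ∀ v ∈ LinearMap.ker L, P v = v)
    (hP₂ : ∀ v ∈ (LinearMap.ker L)ᗮ, P v = 0)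
    (F : V → W → V)
    (hF : ∀ (v : V) (α : W) (u : V),
      (inner ℝ (F v α) u : ℝ) = fderiv ℝ (fun x : V => f (x, α)) v u)
    (U : Set (↥(LinearMap.ker L) × W)) (hUopen : IsOpen U) (hU0 : (0, 0) ∈ U)
    (v₁ : ↥(LinearMap.ker L) × W → ↥(LinearMap.ker L)ᗮ)
    (hv₁diff : ∀ p ∈ U, DifferentiableAt ℝ v₁ p)
    (hsolve : ∀ p ∈ U,
      F ((p.1 : V) + (v₁ p : V)) p.2 - P (F ((p.1 : V) + (v₁ p : V)) p.2) = 0) :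
    ∀ p ∈ U, ∀ w : ↥(LinearMap.ker L),
      (inner ℝ (P (F ((p.1 : V) + (v₁ p : V)) p.2)) (w : V) : ℝ) =
        fderiv ℝ
          (fun x : ↥(LinearMap.ker L) => f ((x : V) + (v₁ (x, p.2) : V), p.2)) p.1 w := by
  intro p hp w
  have hfd : Differentiable ℝ f := hf.differentiable (by norm_num)
  -- P maps into ker L
  have hPmem : ∀ v : V, P v ∈ LinearMap.ker L := by
    intro v
    obtain ⟨y, hy, z, hz, rfl⟩ := (LinearMap.ker L).exists_add_mem_mem_orthogonal v
    rw [map_add, hP₁ y hy, hP₂ z hz, add_zero]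
    exact hy
  -- F = P F at the solution point
  have hFeq : F ((p.1 : V) + (v₁ p : V)) p.2
      = P (F ((p.1 : V) + (v₁ p : V)) p.2) :=
    sub_eq_zero.mp (hsolve p hp)
  have hFmem : F ((p.1 : V) + (v₁ p : V)) p.2 ∈ LinearMap.ker L := by
    rw [hFeq]; exact hPmem _
  -- derivative of the slice x ↦ v₁ (x, p.2)
  have hpair : HasFDerivAt (fun x : ↥(LinearMap.ker L) => (x, p.2))
      ((ContinuousLinearMap.id ℝ ↥(LinearMap.ker L)).prod 0) p.1 :=
    HasFDerivAt.prodMk (hasFDerivAt_id p.1) (hasFDerivAt_const p.2 p.1)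
  have hvp : HasFDerivAt v₁ (fderiv ℝ v₁ p)
      ((fun x : ↥(LinearMap.ker L) => (x, p.2)) p.1) := by
    simpa using (hv₁diff p hp).hasFDerivAt
  have hv1 : HasFDerivAt (fun x : ↥(LinearMap.ker L) => v₁ (x, p.2))
      ((fderiv ℝ v₁ p).comp ((ContinuousLinearMap.id ℝ ↥(LinearMap.ker L)).prod 0)) p.1 :=
    hvp.comp p.1 hpair
  set D : ↥(LinearMap.ker L) →L[ℝ] ↥(LinearMap.ker L)ᗮ :=
    (fderiv ℝ v₁ p).comp ((ContinuousLinearMap.id ℝ ↥(LinearMap.ker L)).prod 0) with hD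
  -- derivative of φ x = (x : V) + v₁ (x, p.2)
  have hφ : HasFDerivAt (fun x : ↥(LinearMap.ker L) => (x : V) + (v₁ (x, p.2) : V))
      ((LinearMap.ker L).subtypeL + (((LinearMap.ker L)ᗮ).subtypeL.comp D)) p.1 :=
    ((LinearMap.ker L).subtypeL.hasFDerivAt).add
      ((((LinearMap.ker L)ᗮ).subtypeL.hasFDerivAt).comp p.1 hv1)
  -- the slice of f is differentiable
  have hfs : DifferentiableAt ℝ (fun y : V => f (y, p.2)) ((p.1 : V) + (v₁ p : V)) :=
    (hfd (((p.1 : V) + (v₁ p : V)), p.2)).comp ((p.1 : V) + (v₁ p : V))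
      (DifferentiableAt.prodMk differentiableAt_fun_id (differentiableAt_const p.2))
  have hfs' : HasFDerivAt (fun y : V => f (y, p.2))
      (fderiv ℝ (fun y : V => f (y, p.2)) ((p.1 : V) + (v₁ p : V)))
      ((fun x : ↥(LinearMap.ker L) => (x : V) + (v₁ (x, p.2) : V)) p.1) := by
    simpa using hfs.hasFDerivAt
  -- chain rule for g
  have hg : HasFDerivAt
      (fun x : ↥(LinearMap.ker L) => f ((x : V) + (v₁ (x, p.2) : V), p.2))
      ((fderiv ℝ (fun y : V => f (y, p.2)) ((p.1 : V) + (v₁ p : V))).comp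
        ((LinearMap.ker L).subtypeL + (((LinearMap.ker L)ᗮ).subtypeL.comp D))) p.1 :=
    by have := hfs'.comp p.1 hφ; exact this
  rw [hg.fderiv]
  have hzero : (inner ℝ (F ((p.1 : V) + (v₁ p : V)) p.2) ((D w : V)) : ℝ) = 0 :=
    (Submodule.mem_orthogonal _ _).mp (D w).2 _ hFmem
  have h1 := hF ((p.1 : V) + (v₁ p : V)) p.2 (w : V)
  have h2 := hF ((p.1 : V) + (v₁ p : V)) p.2 ((D w : V))
  simp only [ContinuousLinearMap.coe_comp', Function.comp_apply,
    ContinuousLinearMap.add_apply, Submodule.coe_subtypeL', Submodule.coe_subtype,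
    map_add]
  rw [← h1, ← h2, hzero, add_zero, ← hFeq]
end

section
/- Let E, F, Z be real Banach spaces, G a group, and ρ : G → (E ≃L E), σ : G → (F ≃L F), τ : G → (Z ≃L Z) group homomorphisms into the continuous linear automorphisms. Let f : E × F → Z satisfy the equivariance condition f(ρ(g)x, σ(g)y) = τ(g)(f(x, y)) for all g ∈ G, x ∈ E, y ∈ F. Suppose (x₀, y₀) is a common fixed point (ρ(g)x₀ = x₀ and σ(g)y₀ = y₀ for all g ∈ G), f(x₀, y₀) = 0, f is strictly differentiable at (x₀, y₀), and the partial derivative of f with respect to the F-variable at (x₀, y₀) is a continuous linear isomorphism from F onto Z. If φ : E → F is continuous at x₀ with φ(x₀) = y₀ and f(x, φ(x)) = 0 for all x in some neighborhood of x₀, then for every g ∈ G there is a neighborhood of x₀ on which φ(ρ(g)x) = σ(g)(φ(x)). -/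
/-- An implicitly defined function obtained from an equivariant equation at a
symmetric point is equivariant: if `f` is `G`-equivariant, `(x₀, y₀)` is a common fixed point,
`f(x₀,y₀) = 0`, `f` is strictly differentiable there with invertible partial derivative in the
second variable, and `φ` solves `f(x, φ(x)) = 0` near `x₀` continuously with `φ(x₀) = y₀`, then
`φ(ρ(g)x) = σ(g)(φ(x))` near `x₀` for every `g`. -/
theorem stmt_8 {E F Z : Type*}
    [NormedAddCommGroup E] [NormedSpace ℝ E] [CompleteSpace E]
    [NormedAddCommGroup F] [NormedSpace ℝ F] [CompleteSpace F]
    [NormedAddCommGroup Z] [NormedSpace ℝ Z] [CompleteSpace Z]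
    {G : Type*} [Group G]
    (ρ : G →* E ≃L[ℝ] E) (σ : G →* F ≃L[ℝ] F) (τ : G →* Z ≃L[ℝ] Z)
    (f : E × F → Z)
    (hequiv : ∀ (g : G) (x : E) (y : F), f (ρ g x, σ g y) = τ g (f (x, y)))
    (x₀ : E) (y₀ : F)
    (hfix : ∀ g : G, ρ g x₀ = x₀ ∧ σ g y₀ = y₀)
    (hzero : f (x₀, y₀) = 0)
    (Df : E × F →L[ℝ] Z)
    (hstrict : HasStrictFDerivAt f Df (x₀, y₀))
    (e : F ≃L[ℝ] Z) (he : ∀ y : F, e y = Df (0, y))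
    (φ : E → F) (hφcont : ContinuousAt φ x₀) (hφ0 : φ x₀ = y₀)
    (hφsol : ∀ᶠ x in nhds x₀, f (x, φ x) = 0) :
    ∀ g : G, ∀ᶠ x in nhds x₀, φ (ρ g x) = σ g (φ x) := by
  intro g
  -- split Df into partial derivatives
  have hsplit : ∀ (p : E) (q : F), Df (p, q) = Df (p, 0) + e q := by
    intro p q
    rw [he, ← map_add]
    norm_num
  -- Build the linear iso (p, q) ↦ (p, Df (p, q))
  set L : E × F →L[ℝ] E × Z :=
    (ContinuousLinearMap.fst ℝ E F).prod Df with hL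
  set L' : E × Z →L[ℝ] E × F :=
    (ContinuousLinearMap.fst ℝ E Z).prod
      ((e.symm : Z →L[ℝ] F).comp
        (ContinuousLinearMap.snd ℝ E Z -
          Df.comp ((ContinuousLinearMap.inl ℝ E F).comp (ContinuousLinearMap.fst ℝ E Z)))) with hL'
  have h1 : Function.LeftInverse L' L := by
    rintro ⟨p, q⟩
    simp only [hL, hL', ContinuousLinearMap.prod_apply, ContinuousLinearMap.coe_comp',
      Function.comp_apply, ContinuousLinearMap.coe_fst', ContinuousLinearMap.coe_snd',
      ContinuousLinearMap.sub_apply, ContinuousLinearMap.inl_apply,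
      ContinuousLinearEquiv.coe_coe, Prod.mk.injEq, true_and]
    rw [hsplit p q, add_sub_cancel_left, e.symm_apply_apply]
  have h2 : Function.RightInverse L' L := by
    rintro ⟨p, z⟩
    simp only [hL, hL', ContinuousLinearMap.prod_apply, ContinuousLinearMap.coe_comp',
      Function.comp_apply, ContinuousLinearMap.coe_fst', ContinuousLinearMap.coe_snd',
      ContinuousLinearMap.sub_apply, ContinuousLinearMap.inl_apply,
      ContinuousLinearEquiv.coe_coe, Prod.mk.injEq, true_and]
    rw [hsplit, e.apply_symm_apply, add_sub_cancel]
  let Φ : (E × F) ≃L[ℝ] (E × Z) := ContinuousLinearEquiv.equivOfInverse L L' h1 h2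
  -- Ψ (x, y) = (x, f (x, y)) has invertible strict derivative Φ at (x₀, y₀)
  set Ψ : E × F → E × Z := fun p => (p.1, f p) with hΨ
  have hΨd : HasStrictFDerivAt Ψ (Φ : E × F →L[ℝ] E × Z) (x₀, y₀) :=
    (HasStrictFDerivAt.prodMk hasStrictFDerivAt_fst hstrict)
  set S := (HasStrictFDerivAt.toOpenPartialHomeomorph Ψ hΨd).source with hS
  have hSnhds : S ∈ nhds (x₀, y₀) :=
    (HasStrictFDerivAt.toOpenPartialHomeomorph Ψ hΨd).open_source.mem_nhds (HasStrictFDerivAt.mem_toOpenPartialHomeomorph_source hΨd)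
  have hinj : Set.InjOn Ψ S := by
    have := (HasStrictFDerivAt.toOpenPartialHomeomorph Ψ hΨd).injOn
    rwa [HasStrictFDerivAt.toOpenPartialHomeomorph_coe hΨd] at this
  -- auxiliary cancellation facts
  have hρ : ∀ v : E, ρ g⁻¹ (ρ g v) = v := by
    intro v
    have : (ρ g⁻¹ * ρ g) v = v := by rw [← map_mul, inv_mul_cancel, map_one]; rfl
    exact this
  have hσ : ∀ v : F, σ g (σ g⁻¹ v) = v := by
    intro v
    have : (σ g * σ g⁻¹) v = v := by rw [← map_mul, mul_inv_cancel, map_one]; rfl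
    exact this
  -- ψ is the transported solution
  set ψ : E → F := fun x => σ g⁻¹ (φ (ρ g x)) with hψ
  have hψ0 : ψ x₀ = y₀ := by
    simp only [hψ, (hfix g).1, hφ0]
    exact (hfix g⁻¹).2
  have hψcont : ContinuousAt ψ x₀ := by
    refine (σ g⁻¹).continuous.continuousAt.comp ?_
    have : ContinuousAt φ (ρ g x₀) := by rwa [(hfix g).1]
    exact this.comp (ρ g).continuous.continuousAt
  have hψsol : ∀ᶠ x in nhds x₀, f (x, ψ x) = 0 := by
    have hρcont : ContinuousAt (fun x => ρ g x) x₀ := (ρ g).continuous.continuousAt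
    have := hρcont.eventually (by rwa [(hfix g).1] : ∀ᶠ x in nhds (ρ g x₀), f (x, φ x) = 0)
    filter_upwards [this] with x hx
    have key : f (ρ g⁻¹ (ρ g x), σ g⁻¹ (φ (ρ g x))) = τ g⁻¹ (f (ρ g x, φ (ρ g x))) :=
      hequiv g⁻¹ (ρ g x) (φ (ρ g x))
    rw [hρ x] at key
    simp only [hψ, key, hx, map_zero]
  -- both (x, φ x) and (x, ψ x) are eventually in S
  have hφS : ∀ᶠ x in nhds x₀, (x, φ x) ∈ S := by
    have : ContinuousAt (fun x => (x, φ x)) x₀ := continuousAt_id.prodMk hφcont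
    have := this.eventually_mem (by rwa [hφ0] : S ∈ nhds (x₀, φ x₀))
    exact this
  have hψS : ∀ᶠ x in nhds x₀, (x, ψ x) ∈ S := by
    have : ContinuousAt (fun x => (x, ψ x)) x₀ := continuousAt_id.prodMk hψcont
    have := this.eventually_mem (by rwa [hψ0] : S ∈ nhds (x₀, ψ x₀))
    exact this
  filter_upwards [hφsol, hψsol, hφS, hψS] with x h1x h2x h3x h4x
  have : Ψ (x, φ x) = Ψ (x, ψ x) := by simp [hΨ, h1x, h2x]
  have heq : (x, φ x) = (x, ψ x) := hinj h3x h4x this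
  have heq2 : φ x = ψ x := congrArg Prod.snd heq
  have : σ g (φ x) = σ g (ψ x) := congrArg _ heq2
  rwa [hψ, hσ, eq_comm] at this
end

section
/- Let (V, ω) be a finite-dimensional real symplectic vector space and A : V → V an infinitesimally symplectic linear map. Define J_A : V → ℝ by J_A(z) := ½ ω(A z, z). Let h : V → ℝ be continuously differentiable with h(exp(tA) z) = h(z) for all t ∈ ℝ and z ∈ V, and let X_h : V → V be the Hamiltonian vector field of h, defined by ω(X_h(z), u) = Dh(z)·u for all u. If z₀ ∈ V satisfies D(h − J_A)(z₀) = 0, then the curve γ(t) := exp(tA) z₀ is an integral curve of X_h: γ′(t) = X_h(γ(t)) for all t ∈ ℝ. -/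
open NormedSpace

section aux

variable {V : Type*} [NormedAddCommGroup V] [NormedSpace ℝ V] [FiniteDimensional ℝ V]

/-- derivative of the flow applied to a point -/
lemma aux_flow_hasDerivAt (A : V →L[ℝ] V) (z : V) (t : ℝ) :
    HasDerivAt (fun s : ℝ => exp (s • A) z) (A (exp (t • A) z)) t := by
  have h1 : HasDerivAt (fun s : ℝ => exp (s • A)) (A * exp (t • A)) t :=
    hasDerivAt_exp_smul_const' A t
  have := h1.clm_apply (hasDerivAt_const t z)
  simpa using this

end aux

set_option maxHeartbeats 1000000 in
set_option synthInstance.maxHeartbeats 200000 in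
/-- If `z₀` is a critical point of the augmented Hamiltonian `h − J_A`, where
`J_A(z) = ½ ω(Az, z)` and `h` is invariant under the flow `exp(tA)` of the infinitesimally
symplectic operator `A`, then `t ↦ exp(tA) z₀` is an integral curve of the Hamiltonian vector
field `X_h`. -/
theorem stmt_11 {V : Type*}
    [NormedAddCommGroup V] [NormedSpace ℝ V] [FiniteDimensional ℝ V]
    (ω : V →ₗ[ℝ] V →ₗ[ℝ] ℝ)
    (halt : ∀ v : V, ω v v = 0)
    (hnondeg : ∀ v : V, (∀ u : V, ω v u = 0) → v = 0)
    (A : V →L[ℝ] V)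
    (hA : ∀ u v : V, ω (A u) v + ω u (A v) = 0)
    (h : V → ℝ) (hC1 : ContDiff ℝ 1 h)
    (hinv : ∀ (t : ℝ) (z : V), h (NormedSpace.exp (t • A) z) = h z)
    (Xh : V → V) (hXh : ∀ z u : V, ω (Xh z) u = fderiv ℝ h z u)
    (z₀ : V)
    (hcrit : fderiv ℝ (fun z : V => h z - (1 / 2 : ℝ) * ω (A z) z) z₀ = 0) :
    ∀ t : ℝ, HasDerivAt (fun s : ℝ => NormedSpace.exp (s • A) z₀)
      (Xh (NormedSpace.exp (t • A) z₀)) t := by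
  -- continuous version of ω
  let Ω₁ : V →ₗ[ℝ] V →L[ℝ] ℝ :=
    { toFun := fun v => LinearMap.toContinuousLinearMap (ω v)
      map_add' := fun u v => by ext w; simp
      map_smul' := fun c v => by ext w; simp }
  let Ω : V →L[ℝ] V →L[ℝ] ℝ := LinearMap.toContinuousLinearMap Ω₁
  have hΩ : ∀ u v : V, Ω u v = ω u v := fun u v => rfl
  -- skew symmetry
  have hskew : ∀ u v : V, ω u v = - ω v u := by
    intro u v
    have := halt (u + v)
    simp only [map_add, LinearMap.add_apply, halt] at this
    linarith
  -- differentiability of h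
  have hdh : Differentiable ℝ h := hC1.differentiable one_ne_zero
  -- symplectic invariance of the flow
  have hsymp : ∀ (t : ℝ) (u v : V),
      ω (exp (t • A) u) (exp (t • A) v) = ω u v := by
    intro t u v
    set f : ℝ → ℝ := fun s => Ω (exp (s • A) u) (exp (s • A) v) with hf
    have hderiv : ∀ s : ℝ, HasDerivAt f 0 s := by
      intro s
      have h1 := aux_flow_hasDerivAt A u s
      have h2 := aux_flow_hasDerivAt A v s
      have hc : HasDerivAt (fun s : ℝ => Ω (exp (s • A) u))
          (Ω (A (exp (s • A) u))) s :=
        Ω.hasFDerivAt.comp_hasDerivAt s h1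
      have := hc.clm_apply h2
      have hzero : Ω (A (exp (s • A) u)) (exp (s • A) v)
          + Ω (exp (s • A) u) (A (exp (s • A) v)) = 0 := by
        rw [hΩ, hΩ]; exact hA _ _
      rw [hzero] at this
      exact this
    have hconst : f t = f 0 :=
      is_const_of_deriv_eq_zero (fun s => (hderiv s).differentiableAt)
        (fun s => (hderiv s).deriv) t 0
    have h0 : f 0 = ω u v := by
      simp only [hf, zero_smul, exp_zero, ContinuousLinearMap.one_apply, hΩ]
    have ht : f t = ω (exp (t • A) u) (exp (t • A) v) := rfl
    rw [← ht, hconst, h0]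
  -- derivative of J_A
  have hJ : HasFDerivAt (fun z : V => (1 / 2 : ℝ) * ω (A z) z)
      ((1 / 2 : ℝ) • ((Ω.comp A).flip z₀ + (Ω.comp A) z₀)) z₀ := by
    have hb : HasFDerivAt (fun z : V => (Ω.comp A) z z)
        ((Ω.comp A).flip z₀ + (Ω.comp A) z₀) z₀ := by
      have := (HasFDerivAt.clm_apply (c := fun z : V => (Ω.comp A) z)
        (u := fun z : V => z) ((Ω.comp A).hasFDerivAt) (hasFDerivAt_id z₀))
      convert this using 1
      ext u
      simp only [ContinuousLinearMap.add_apply, ContinuousLinearMap.flip_apply,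
        ContinuousLinearMap.comp_apply, ContinuousLinearMap.coe_id', id_eq]
      exact add_comm _ _
    have := hb.const_mul (1 / 2 : ℝ)
    exact this
  -- fderiv h z₀ = ω (A z₀) ·
  have hcrit' : ∀ u : V, fderiv ℝ h z₀ u = ω (A z₀) u := by
    intro u
    have hdiffJ : DifferentiableAt ℝ (fun z : V => (1 / 2 : ℝ) * ω (A z) z) z₀ :=
      hJ.differentiableAt
    have hsub : fderiv ℝ (fun z : V => h z - (1 / 2 : ℝ) * ω (A z) z) z₀
        = fderiv ℝ h z₀ - fderiv ℝ (fun z : V => (1 / 2 : ℝ) * ω (A z) z) z₀ :=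
      fderiv_sub (hdh z₀) hdiffJ
    rw [hcrit] at hsub
    have hEq : fderiv ℝ h z₀ = fderiv ℝ (fun z : V => (1 / 2 : ℝ) * ω (A z) z) z₀ := by
      have := sub_eq_zero.mp hsub.symm
      exact this
    rw [hEq, hJ.fderiv]
    have h1 : ω (A u) z₀ = ω (A z₀) u := by
      have := hA u z₀
      have h2 := hskew z₀ (A u)
      -- ω (A u) z₀ = - ω z₀ (A u) = ω (A z₀) u
      have h3 : ω u (A z₀) = - ω (A u) z₀ := by linarith [hA u z₀]
      have h4 := hskew u (A z₀)
      rw [h4] at h3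
      linarith
    simp only [ContinuousLinearMap.smul_apply, ContinuousLinearMap.add_apply,
      ContinuousLinearMap.flip_apply, ContinuousLinearMap.comp_apply, hΩ, smul_eq_mul]
    rw [h1]
    ring
  intro t
  -- invariance gives fderiv h (E z₀) ∘ E = fderiv h z₀
  set E : V →L[ℝ] V := exp (t • A) with hE
  have hEcomm : A * E = E * A := by
    have h1 : Commute (t • A) A := (Commute.refl A).smul_left t
    have h2 : Commute (exp (t • A)) A := h1.exp_left
    exact h2.eq.symm
  have hEinv : ∀ w : V, E (exp (-(t • A)) w) = w := by
    intro w
    have hcomm : Commute (t • A) (-(t • A)) := (Commute.refl (t • A)).neg_right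
    have : exp (t • A) * exp (-(t • A)) = 1 := by
      rw [← exp_add_of_commute_of_mem_ball (𝕂 := ℝ) hcomm
        ((expSeries_radius_eq_top ℝ (V →L[ℝ] V)).symm ▸ edist_lt_top _ _)
        ((expSeries_radius_eq_top ℝ (V →L[ℝ] V)).symm ▸ edist_lt_top _ _), add_neg_cancel, exp_zero]
    calc E (exp (-(t • A)) w) = (exp (t • A) * exp (-(t • A))) w := rfl
      _ = w := by rw [this]; rfl
  have hchain : ∀ u : V, fderiv ℝ h (E z₀) (E u) = fderiv ℝ h z₀ u := by
    intro u
    have hcomp : HasFDerivAt (fun z : V => h (E z)) ((fderiv ℝ h (E z₀)).comp E) z₀ :=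
      (hdh (E z₀)).hasFDerivAt.comp z₀ E.hasFDerivAt
    have hfun : (fun z : V => h (E z)) = h := funext (hinv t)
    rw [hfun] at hcomp
    have := hcomp.fderiv
    rw [this]
    rfl
  have hkey : ∀ w : V, fderiv ℝ h (E z₀) w = ω (A (E z₀)) w := by
    intro w
    obtain ⟨u, hu⟩ : ∃ u : V, E u = w := ⟨exp (-(t • A)) w, hEinv w⟩
    rw [← hu, hchain, hcrit' u]
    have hAE : A (E z₀) = E (A z₀) := by
      calc A (E z₀) = (A * E) z₀ := rfl
        _ = (E * A) z₀ := by rw [hEcomm]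
        _ = E (A z₀) := rfl
    rw [hAE, hsymp t (A z₀) u]
  -- conclude Xh (E z₀) = A (E z₀)
  have hfinal : Xh (E z₀) = A (E z₀) := by
    have : ∀ u : V, ω (Xh (E z₀) - A (E z₀)) u = 0 := by
      intro u
      rw [map_sub, LinearMap.sub_apply, hXh, hkey]
      ring
    have := hnondeg _ this
    exact sub_eq_zero.mp this
  rw [hE] at hfinal
  rw [hfinal]
  exact aux_flow_hasDerivAt A z₀ t
end

section
/- Let h : ℝ⁶ → ℝ be continuously differentiable and define H : ℂ⁴ → ℝ by H(z) := h(|z₁|², |z₂|², |z₃|², |z₄|², Re(z₁² conj(z₃)), Re(z₂² conj(z₄))), and J^ξ(z) := ξ₁(|z₁|² + 2|z₃|²) + ξ₂(|z₂|² + 2|z₄|²) for ξ = (ξ₁, ξ₂) ∈ ℝ². Then for every w ∈ ℂ and every ξ₂ ∈ ℝ, setting ξ₁ := ½ ∂₃h(0, 0, |w|², 0, 0, 0), the point (0, 0, w, 0) is a critical point of H − J^{(ξ₁, ξ₂)}: the Fréchet derivative D(H − J^{(ξ₁, ξ₂)})(0, 0, w, 0) is zero. In particular every element of the fixed-point subspace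 {(0, 0, w, 0) : w ∈ ℂ} is a relative equilibrium with generator (ξ₁, ξ₂). -/
open ContinuousLinearMap

lemma aux_normSq (i : Fin 4) (a : Fin 4 → ℂ) :
    HasFDerivAt (fun z : Fin 4 → ℂ => Complex.normSq (z i))
      (Complex.reCLM.comp ((a i) • ((Complex.conjCLE.toContinuousLinearMap).comp
          (proj i : (Fin 4 → ℂ) →L[ℝ] ℂ)) +
        ((starRingEnd ℂ) (a i)) • (proj i : (Fin 4 → ℂ) →L[ℝ] ℂ))) a := by
  have h1 : HasFDerivAt (fun z : Fin 4 → ℂ => z i) (proj i : (Fin 4 → ℂ) →L[ℝ] ℂ) a :=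
    hasFDerivAt_apply i a
  have h2 : HasFDerivAt (fun z : Fin 4 → ℂ => (starRingEnd ℂ) (z i))
      ((Complex.conjCLE.toContinuousLinearMap).comp (proj i)) a := by
    exact (Complex.conjCLE.toContinuousLinearMap.hasFDerivAt).comp a h1
  have h3 := h1.mul h2
  have h4 := Complex.reCLM.hasFDerivAt.comp a h3
  have he : (fun z : Fin 4 → ℂ => Complex.reCLM (z i * (starRingEnd ℂ) (z i))) =
      fun z : Fin 4 → ℂ => Complex.normSq (z i) := by
    funext z; simp [Complex.mul_conj]
  rw [← he]
  exact h4

lemma aux_normSq0 {i : Fin 4} {a : Fin 4 → ℂ} (ha : a i = 0) :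
    HasFDerivAt (fun z : Fin 4 → ℂ => Complex.normSq (z i))
      (0 : (Fin 4 → ℂ) →L[ℝ] ℝ) a := by
  refine (aux_normSq i a).congr_fderiv ?_
  ext v
  simp [ha]

lemma aux_U {i j : Fin 4} (a : Fin 4 → ℂ) (ha : a i = 0) :
    HasFDerivAt (fun z : Fin 4 → ℂ => ((z i) ^ 2 * (starRingEnd ℂ) (z j)).re)
      (0 : (Fin 4 → ℂ) →L[ℝ] ℝ) a := by
  have h1i : HasFDerivAt (fun z : Fin 4 → ℂ => z i) (proj i : (Fin 4 → ℂ) →L[ℝ] ℂ) a :=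
    hasFDerivAt_apply i a
  have h1j : HasFDerivAt (fun z : Fin 4 → ℂ => z j) (proj j : (Fin 4 → ℂ) →L[ℝ] ℂ) a :=
    hasFDerivAt_apply j a
  have h2 : HasFDerivAt (fun z : Fin 4 → ℂ => (starRingEnd ℂ) (z j))
      ((Complex.conjCLE.toContinuousLinearMap).comp (proj j)) a :=
    (Complex.conjCLE.toContinuousLinearMap.hasFDerivAt).comp a h1j
  have hsq := h1i.mul h1i
  have hmul := hsq.mul h2
  have h4 := Complex.reCLM.hasFDerivAt.comp a hmul
  have he : (fun z : Fin 4 → ℂ => Complex.reCLM (z i * z i * (starRingEnd ℂ) (z j))) =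
      fun z : Fin 4 → ℂ => ((z i) ^ 2 * (starRingEnd ℂ) (z j)).re := by
    funext z; simp [pow_two]
  rw [← he]
  refine h4.congr_fderiv ?_
  ext v
  simp [ha]

/-- Every point `(0, 0, w, 0)` of `ℂ⁴` is a critical point of the augmented
Hamiltonian `H − J^{(ξ₁, ξ₂)}` with `ξ₁ = ½ ∂₃h(0,0,|w|²,0,0,0)` and arbitrary `ξ₂`; i.e. each
element of the fixed-point subspace is a relative equilibrium with generator `(ξ₁, ξ₂)`. -/
theorem stmt_15 (h : (Fin 6 → ℝ) → ℝ) (hC1 : ContDiff ℝ 1 h) :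
    ∀ (w : ℂ) (ξ₂ : ℝ),
      fderiv ℝ (fun z : Fin 4 → ℂ =>
          h ![Complex.normSq (z 0), Complex.normSq (z 1), Complex.normSq (z 2),
              Complex.normSq (z 3), ((z 0) ^ 2 * (starRingEnd ℂ) (z 2)).re,
              ((z 1) ^ 2 * (starRingEnd ℂ) (z 3)).re] -
          (((1 / 2 : ℝ) *
              fderiv ℝ h ![0, 0, Complex.normSq w, 0, 0, 0] (Pi.single (2 : Fin 6) (1 : ℝ))) *
              (Complex.normSq (z 0) + 2 * Complex.normSq (z 2)) +
           ξ₂ * (Complex.normSq (z 1) + 2 * Complex.normSq (z 3))))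
        ![0, 0, w, 0] = 0 := by
  intro w ξ₂
  set p : Fin 4 → ℂ := ![0, 0, w, 0] with hp
  set q : Fin 6 → ℝ := ![0, 0, Complex.normSq w, 0, 0, 0] with hq
  set c : ℝ := fderiv ℝ h q (Pi.single (2 : Fin 6) (1 : ℝ)) with hc
  have hp0 : p 0 = 0 := rfl
  have hp1 : p 1 = 0 := rfl
  have hp2 : p 2 = w := rfl
  have hp3 : p 3 = 0 := rfl
  -- derivative of normSq (z 2)
  set D2 : (Fin 4 → ℂ) →L[ℝ] ℝ :=
    Complex.reCLM.comp (w • ((Complex.conjCLE.toContinuousLinearMap).comp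
        (proj 2 : (Fin 4 → ℂ) →L[ℝ] ℂ)) +
      ((starRingEnd ℂ) w) • (proj 2 : (Fin 4 → ℂ) →L[ℝ] ℂ)) with hD2def
  have hD2 : HasFDerivAt (fun z : Fin 4 → ℂ => Complex.normSq (z 2)) D2 p :=
    aux_normSq 2 p
  -- derivative of the six-component map
  set Φ' : (Fin 4 → ℂ) →L[ℝ] (Fin 6 → ℝ) :=
    D2.smulRight (Pi.single (2 : Fin 6) (1 : ℝ)) with hΦ'
  have hg : HasFDerivAt (fun z : Fin 4 → ℂ =>
      (![Complex.normSq (z 0), Complex.normSq (z 1), Complex.normSq (z 2),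
          Complex.normSq (z 3), ((z 0) ^ 2 * (starRingEnd ℂ) (z 2)).re,
          ((z 1) ^ 2 * (starRingEnd ℂ) (z 3)).re] : Fin 6 → ℝ)) Φ' p := by
    apply hasFDerivAt_pi''
    intro i
    fin_cases i
    · have e : ((proj (0 : Fin 6)).comp Φ' : (Fin 4 → ℂ) →L[ℝ] ℝ) = 0 := by
        ext v; simp [hΦ', Pi.single_apply]
      simpa [e] using aux_normSq0 hp0
    · have e : ((proj (1 : Fin 6)).comp Φ' : (Fin 4 → ℂ) →L[ℝ] ℝ) = 0 := by
        ext v; simp [hΦ', Pi.single_apply]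
      simpa [e] using aux_normSq0 hp1
    · have e : ((proj (2 : Fin 6)).comp Φ' : (Fin 4 → ℂ) →L[ℝ] ℝ) = D2 := by
        ext v; simp [hΦ', Pi.single_apply]
      simpa [e] using hD2
    · have e : ((proj (3 : Fin 6)).comp Φ' : (Fin 4 → ℂ) →L[ℝ] ℝ) = 0 := by
        ext v; simp [hΦ', Pi.single_apply]
      simpa [e] using aux_normSq0 hp3
    · have e : ((proj (4 : Fin 6)).comp Φ' : (Fin 4 → ℂ) →L[ℝ] ℝ) = 0 := by
        ext v; simp [hΦ', Pi.single_apply]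
      simpa [e] using aux_U p hp0
    · have e : ((proj (5 : Fin 6)).comp Φ' : (Fin 4 → ℂ) →L[ℝ] ℝ) = 0 := by
        ext v; simp [hΦ', Pi.single_apply]
      simpa [e] using aux_U p hp1
  -- value of the six-component map at p
  have hgp : (![Complex.normSq (p 0), Complex.normSq (p 1), Complex.normSq (p 2),
      Complex.normSq (p 3), ((p 0) ^ 2 * (starRingEnd ℂ) (p 2)).re,
      ((p 1) ^ 2 * (starRingEnd ℂ) (p 3)).re] : Fin 6 → ℝ) = q := by
    funext i
    fin_cases i <;> simp [hp0, hp1, hp2, hp3, hq]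
  have hdh : HasFDerivAt h (fderiv ℝ h q)
      (![Complex.normSq (p 0), Complex.normSq (p 1), Complex.normSq (p 2),
        Complex.normSq (p 3), ((p 0) ^ 2 * (starRingEnd ℂ) (p 2)).re,
        ((p 1) ^ 2 * (starRingEnd ℂ) (p 3)).re] : Fin 6 → ℝ) := by
    rw [hgp]; exact ((hC1.differentiable one_ne_zero) q).hasFDerivAt
  have hH : HasFDerivAt (fun z : Fin 4 → ℂ =>
      h ![Complex.normSq (z 0), Complex.normSq (z 1), Complex.normSq (z 2),
          Complex.normSq (z 3), ((z 0) ^ 2 * (starRingEnd ℂ) (z 2)).re,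
          ((z 1) ^ 2 * (starRingEnd ℂ) (z 3)).re])
      ((fderiv ℝ h q).comp Φ') p := hdh.comp p hg
  -- the J part
  have hA : HasFDerivAt (fun z : Fin 4 → ℂ =>
      Complex.normSq (z 0) + 2 * Complex.normSq (z 2))
      ((0 : (Fin 4 → ℂ) →L[ℝ] ℝ) + (2 : ℝ) • D2) p :=
    (aux_normSq0 hp0).add (hD2.const_mul 2)
  have hB : HasFDerivAt (fun z : Fin 4 → ℂ =>
      Complex.normSq (z 1) + 2 * Complex.normSq (z 3))
      ((0 : (Fin 4 → ℂ) →L[ℝ] ℝ) + (2 : ℝ) • (0 : (Fin 4 → ℂ) →L[ℝ] ℝ)) p :=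
    (aux_normSq0 hp1).add ((aux_normSq0 hp3).const_mul 2)
  have hJ := (hA.const_mul ((1 / 2 : ℝ) * c)).add (hB.const_mul ξ₂)
  have hF := hH.sub hJ
  refine Eq.trans hF.fderiv ?_
  ext v
  simp [hΦ', hc, ContinuousLinearMap.smulRight_apply, map_smul, smul_eq_mul]
  ring
end

section
/- Let h : ℝ⁶ → ℝ be continuously differentiable, define H : ℂ⁴ → ℝ by H(z) := h(|z₁|², |z₂|², |z₃|², |z₄|², Re(z₁² conj(z₃)), Re(z₂² conj(z₄))), and let X_H : ℂ⁴ → ℂ⁴ be the Hamiltonian vector field of H with respect to the symplectic form ω(u, v) := 2 Σ_{j=1}^{4} Im(u_j · conj(v_j)), i.e. ω(X_H(z), v) = DH(z)·v for all v. Then for every C ∈ ℝ, writing a₃ := ∂₃h(0, 0, C², 0, 0, 0), the curve γ(t) := (0, 0, C e^{i a₃ t}, 0) is an integral curve of X_H: γ′(t) = X_H(γ(t)) for all t ∈ ℝ. (This is the family RE_I of periodic relative equilibria through (0, 0, C, 0).) -/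
open Complex ContinuousLinearMap

noncomputable def prj (j : Fin 4) : (Fin 4 → ℂ) →L[ℝ] ℂ :=
  ContinuousLinearMap.proj j

lemma hasFDerivAt_invF (c : ℂ) :
    HasFDerivAt (fun z : Fin 4 → ℂ =>
        (![Complex.normSq (z 0), Complex.normSq (z 1), Complex.normSq (z 2),
           Complex.normSq (z 3), ((z 0) ^ 2 * (starRingEnd ℂ) (z 2)).re,
           ((z 1) ^ 2 * (starRingEnd ℂ) (z 3)).re] : Fin 6 → ℝ))
      (ContinuousLinearMap.pi
        (Pi.single (2 : Fin 6) ((2 : ℝ) • (Complex.reCLM.comp (((starRingEnd ℂ) c) • prj 2)))))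
      ![0, 0, c, 0] := by
  set x : Fin 4 → ℂ := ![0, 0, c, 0] with hx
  have hre : ∀ j : Fin 4, HasFDerivAt (fun z : Fin 4 → ℂ => (z j).re)
      (Complex.reCLM.comp (prj j)) x := fun j => by exact (Complex.reCLM.comp (prj j)).hasFDerivAt
  have him : ∀ j : Fin 4, HasFDerivAt (fun z : Fin 4 → ℂ => (z j).im)
      (Complex.imCLM.comp (prj j)) x := fun j => by exact (Complex.imCLM.comp (prj j)).hasFDerivAt
  have hz : ∀ j : Fin 4, HasFDerivAt (fun z : Fin 4 → ℂ => z j) (prj j) x :=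
    fun j => by exact (prj j).hasFDerivAt
  have hconj : ∀ j : Fin 4, HasFDerivAt (fun z : Fin 4 → ℂ => (starRingEnd ℂ) (z j))
      (Complex.conjCLE.toContinuousLinearMap.comp (prj j)) x :=
    fun j => by exact (Complex.conjCLE.toContinuousLinearMap.comp (prj j)).hasFDerivAt
  have hsq : ∀ j : Fin 4, HasFDerivAt (fun z : Fin 4 → ℂ => Complex.normSq (z j))
      ((x j).re • (Complex.reCLM.comp (prj j)) + (x j).re • (Complex.reCLM.comp (prj j))
        + ((x j).im • (Complex.imCLM.comp (prj j)) + (x j).im • (Complex.imCLM.comp (prj j)))) x := by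
    intro j
    have := ((hre j).mul (hre j)).add ((him j).mul (him j))
    simp only [Complex.normSq_apply]
    exact this
  have hcross : ∀ j k : Fin 4, HasFDerivAt
      (fun z : Fin 4 → ℂ => ((z j) ^ 2 * (starRingEnd ℂ) (z k)).re)
      (Complex.reCLM.comp
        (((x j * x j) • (Complex.conjCLE.toContinuousLinearMap.comp (prj k)))
          + ((starRingEnd ℂ) (x k)) • (x j • prj j + x j • prj j))) x := by
    intro j k
    have hmul := ((hz j).mul (hz j)).mul (hconj k)
    have := Complex.reCLM.hasFDerivAt.comp x hmul
    simp only [pow_two]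
    exact this
  rw [hasFDerivAt_pi']
  intro i
  fin_cases i
  · show HasFDerivAt (fun z : Fin 4 → ℂ => Complex.normSq (z 0)) _ x
    refine (hsq 0).congr_fderiv ?_
    refine ContinuousLinearMap.ext fun v => ?_
    simp [hx, proj_pi, Pi.single_apply]
  · show HasFDerivAt (fun z : Fin 4 → ℂ => Complex.normSq (z 1)) _ x
    refine (hsq 1).congr_fderiv ?_
    refine ContinuousLinearMap.ext fun v => ?_
    simp [hx, proj_pi, Pi.single_apply]
  · show HasFDerivAt (fun z : Fin 4 → ℂ => Complex.normSq (z 2)) _ x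
    refine (hsq 2).congr_fderiv ?_
    refine ContinuousLinearMap.ext fun v => ?_
    simp [hx, proj_pi, prj, Pi.single_apply, Complex.mul_re]
    try ring
  · show HasFDerivAt (fun z : Fin 4 → ℂ => Complex.normSq (z 3)) _ x
    refine (hsq 3).congr_fderiv ?_
    refine ContinuousLinearMap.ext fun v => ?_
    simp [hx, proj_pi, Pi.single_apply]
  · show HasFDerivAt (fun z : Fin 4 → ℂ => ((z 0) ^ 2 * (starRingEnd ℂ) (z 2)).re) _ x
    refine (hcross 0 2).congr_fderiv ?_
    refine ContinuousLinearMap.ext fun v => ?_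
    simp [hx, proj_pi, Pi.single_apply]
  · show HasFDerivAt (fun z : Fin 4 → ℂ => ((z 1) ^ 2 * (starRingEnd ℂ) (z 3)).re) _ x
    refine (hcross 1 3).congr_fderiv ?_
    refine ContinuousLinearMap.ext fun v => ?_
    simp [hx, proj_pi, Pi.single_apply]

lemma im_mul_conj_I (w : ℂ) : (w * (starRingEnd ℂ) (Complex.I * w)).im = -Complex.normSq w := by
  simp only [Complex.mul_im, Complex.mul_re, Complex.normSq_apply, Complex.conj_re,
    Complex.conj_im, Complex.mul_re, Complex.I_re, Complex.I_im]
  ring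

/-- The curve `γ(t) = (0, 0, C e^{i a₃ t}, 0)`, with
`a₃ = ∂₃h(0,0,C²,0,0,0)`, is an integral curve of the Hamiltonian vector field `X_H` of the
invariant Hamiltonian `H` with respect to `ω(u,v) = 2 Σ Im(u_j conj(v_j))` (the family `RE_I`
of periodic relative equilibria through `(0,0,C,0)`). -/
theorem stmt_16 (h : (Fin 6 → ℝ) → ℝ) (hC1 : ContDiff ℝ 1 h) (C : ℝ)
    (XH : (Fin 4 → ℂ) → Fin 4 → ℂ)
    (hXH : ∀ z v : Fin 4 → ℂ,
      (2 : ℝ) * ∑ j : Fin 4, (XH z j * (starRingEnd ℂ) (v j)).im =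
        fderiv ℝ (fun z : Fin 4 → ℂ =>
          h ![Complex.normSq (z 0), Complex.normSq (z 1), Complex.normSq (z 2),
              Complex.normSq (z 3), ((z 0) ^ 2 * (starRingEnd ℂ) (z 2)).re,
              ((z 1) ^ 2 * (starRingEnd ℂ) (z 3)).re]) z v)
    (a₃ : ℝ)
    (ha₃ : a₃ = fderiv ℝ h ![0, 0, C ^ 2, 0, 0, 0] (Pi.single (2 : Fin 6) (1 : ℝ))) :
    ∀ t : ℝ, HasDerivAt
      (fun s : ℝ =>
        (![0, 0, (C : ℂ) * Complex.exp (Complex.I * (a₃ : ℂ) * (s : ℂ)), 0] : Fin 4 → ℂ))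
      (XH ![0, 0, (C : ℂ) * Complex.exp (Complex.I * (a₃ : ℂ) * (t : ℂ)), 0]) t := by
  intro t
  set c : ℂ := (C : ℂ) * Complex.exp (Complex.I * (a₃ : ℂ) * (t : ℂ)) with hc
  set x : Fin 4 → ℂ := ![0, 0, c, 0] with hx
  -- the candidate derivative
  set d : Fin 4 → ℂ := ![0, 0, Complex.I * (a₃ : ℂ) * c, 0] with hd
  -- Step 1 : the curve has derivative `d` at `t`
  have hγ : HasDerivAt
      (fun s : ℝ =>
        (![0, 0, (C : ℂ) * Complex.exp (Complex.I * (a₃ : ℂ) * (s : ℂ)), 0] : Fin 4 → ℂ)) d t := by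
    rw [hasDerivAt_pi]
    intro i
    fin_cases i
    · exact hasDerivAt_const _ _
    · exact hasDerivAt_const _ _
    · show HasDerivAt (fun s : ℝ => (C : ℂ) * Complex.exp (Complex.I * (a₃ : ℂ) * (s : ℂ)))
        (Complex.I * (a₃ : ℂ) * c) t
      have h1 : HasDerivAt (fun s : ℝ => Complex.I * (a₃ : ℂ) * (s : ℂ))
          (Complex.I * (a₃ : ℂ)) t := by
        simpa using (Complex.ofRealCLM.hasDerivAt (x := t)).const_mul (Complex.I * (a₃ : ℂ))
      have h2 := (h1.cexp).const_mul (C : ℂ)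
      refine h2.congr_deriv ?_
      rw [hc]; ring
    · exact hasDerivAt_const _ _
  -- Step 2 : value of the invariants at `x`
  have hcn : Complex.normSq c = C ^ 2 := by
    rw [hc, Complex.normSq_mul, Complex.normSq_eq_norm_sq, Complex.normSq_eq_norm_sq, Complex.norm_exp]
    simp [pow_two]
  have hFx : (fun z : Fin 4 → ℂ =>
        (![Complex.normSq (z 0), Complex.normSq (z 1), Complex.normSq (z 2),
           Complex.normSq (z 3), ((z 0) ^ 2 * (starRingEnd ℂ) (z 2)).re,
           ((z 1) ^ 2 * (starRingEnd ℂ) (z 3)).re] : Fin 6 → ℝ)) x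
      = ![0, 0, C ^ 2, 0, 0, 0] := by
    funext i
    fin_cases i <;> simp [hx, hcn]
  -- Step 3 : derivative of `H` at `x`
  set Lh := fderiv ℝ h ![0, 0, C ^ 2, 0, 0, 0] with hLh
  set M : (Fin 4 → ℂ) →L[ℝ] ℝ :=
    (2 : ℝ) • (Complex.reCLM.comp (((starRingEnd ℂ) c) • prj 2)) with hM
  have hh : HasFDerivAt h Lh ((fun z : Fin 4 → ℂ =>
        (![Complex.normSq (z 0), Complex.normSq (z 1), Complex.normSq (z 2),
           Complex.normSq (z 3), ((z 0) ^ 2 * (starRingEnd ℂ) (z 2)).re,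
           ((z 1) ^ 2 * (starRingEnd ℂ) (z 3)).re] : Fin 6 → ℝ)) x) := by
    rw [hFx]
    exact ((hC1.differentiable one_ne_zero).differentiableAt).hasFDerivAt
  have hH : HasFDerivAt (fun z : Fin 4 → ℂ =>
        h ![Complex.normSq (z 0), Complex.normSq (z 1), Complex.normSq (z 2),
            Complex.normSq (z 3), ((z 0) ^ 2 * (starRingEnd ℂ) (z 2)).re,
            ((z 1) ^ 2 * (starRingEnd ℂ) (z 3)).re])
      (Lh.comp (ContinuousLinearMap.pi (Pi.single (2 : Fin 6) M))) x :=
    hh.comp x (hasFDerivAt_invF c)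
  -- Step 4 : the key identity
  have key : ∀ v : Fin 4 → ℂ,
      (2 : ℝ) * ∑ j : Fin 4, (XH x j * (starRingEnd ℂ) (v j)).im = (M v) * a₃ := by
    intro v
    rw [hXH x v, hH.fderiv]
    have h1 : (ContinuousLinearMap.pi (Pi.single (2 : Fin 6) M) : (Fin 4 → ℂ) →L[ℝ] (Fin 6 → ℝ)) v
        = (M v) • (Pi.single (2 : Fin 6) (1 : ℝ) : Fin 6 → ℝ) := by
      funext i
      simp only [ContinuousLinearMap.pi_apply, Pi.smul_apply, smul_eq_mul]
      by_cases hi : i = 2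
      · subst hi; simp
      · simp [Pi.single_apply, hi]
    rw [ContinuousLinearMap.comp_apply, h1, map_smul, smul_eq_mul, ha₃]
  -- Step 5 : `ω(d, v)` equals the same thing
  have keyd : ∀ v : Fin 4 → ℂ,
      (2 : ℝ) * ∑ j : Fin 4, (d j * (starRingEnd ℂ) (v j)).im = (M v) * a₃ := by
    intro v
    rw [hd, hM]
    rw [Fin.sum_univ_four]
    simp only [Matrix.cons_val_zero, Matrix.cons_val_one, Matrix.head_cons, Matrix.cons_val_two,
      Matrix.tail_cons, Matrix.cons_val_three]
    simp [prj, Complex.mul_im, Complex.mul_re]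
    ring
  -- Step 6 : nondegeneracy of ω forces `XH x = d`
  have hdiff : ∀ v : Fin 4 → ℂ,
      ∑ j : Fin 4, ((XH x j - d j) * (starRingEnd ℂ) (v j)).im = 0 := by
    intro v
    have h1 := key v
    have h2 := keyd v
    have h3 : (2 : ℝ) * ∑ j : Fin 4, ((XH x j - d j) * (starRingEnd ℂ) (v j)).im = 0 := by
      have : ∀ j : Fin 4, ((XH x j - d j) * (starRingEnd ℂ) (v j)).im
          = (XH x j * (starRingEnd ℂ) (v j)).im - (d j * (starRingEnd ℂ) (v j)).im := by
        intro j; rw [sub_mul, Complex.sub_im]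
      simp only [this, Finset.sum_sub_distrib]
      rw [mul_sub]
      rw [h1, h2]; ring
    linarith
  have hXd : XH x = d := by
    have hsum := hdiff (fun j => Complex.I * (XH x j - d j))
    rw [Fin.sum_univ_four] at hsum
    simp only [im_mul_conj_I] at hsum
    have key4 : ∑ k : Fin 4, Complex.normSq (XH x k - d k) = 0 := by
      rw [Fin.sum_univ_four]; linarith
    have hj := (Finset.sum_eq_zero_iff_of_nonneg
      (fun k _ => Complex.normSq_nonneg (XH x k - d k))).1 key4
    funext j
    exact sub_eq_zero.1 (Complex.normSq_eq_zero.1 (hj j (Finset.mem_univ j)))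
  rw [hXd]
  exact hγ
end

section
/- Let h : ℝ⁶ → ℝ be twice continuously differentiable, define H : ℂ⁴ → ℝ by H(z) := h(|z₁|², |z₂|², |z₃|², |z₄|², Re(z₁² conj(z₃)), Re(z₂² conj(z₄))), fix C ∈ ℝ and ξ₂ ∈ ℝ, set a_j := ∂_j h(0, 0, C², 0, 0, 0) for j = 1, 3 and b₁ := ∂₅h(0, 0, C², 0, 0, 0), let ξ := (a₃/2, ξ₂) and J^ξ(z) := (a₃/2)(|z₁|² + 2|z₃|²) + ξ₂(|z₂|² + 2|z₄|²). Then the second Fréchet derivative of H − J^ξ at z_e := (0, 0, C, 0) satisfies, for all x, y ∈ ℝ, D²(H − J^ξ)(z_e)[(x + i y, 0, 0, 0), (x + i y, 0, 0, 0)] = 2(a₁ − a₃/2 + C b₁) x² + 2(a₁ − a₃/2 − C b₁) y². In particular the eigenvalues of the Hessian restricted to the z₁-plane are λ₁⁺ = a₁ − a₃/2 + C b₁ (eigenvector (1,0,0,0)) and λ₁⁻ = a₁ − a₃/2 − C b₁ (eigenvector (i,0,0,0)), up to the overall factor 2. -/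
open Complex

private lemma normSq_contDiff {n : ℕ∞} : ContDiff ℝ n Complex.normSq := by
  have : (Complex.normSq : ℂ → ℝ) = fun z => z.re * z.re + z.im * z.im := by
    funext z; exact Complex.normSq_apply z
  rw [this]
  exact (Complex.reCLM.contDiff.mul Complex.reCLM.contDiff).add
    (Complex.imCLM.contDiff.mul Complex.imCLM.contDiff)

private lemma cons_val_five {α : Type*} (a b c d e f : α) :
    ![a, b, c, d, e, f] 5 = f := rfl

private lemma proj_contDiff {n : ℕ∞} (j : Fin 4) :
    ContDiff ℝ n fun z : Fin 4 → ℂ => z j :=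
  (ContinuousLinearMap.proj j : (Fin 4 → ℂ) →L[ℝ] ℂ).contDiff

/-- shift invariance of the second derivative -/
private lemma shift2 {E : Type*} [NormedAddCommGroup E] [NormedSpace ℝ E]
    (f : E → ℝ) (hf : ContDiff ℝ 2 f) (c v w : E) :
    fderiv ℝ (fderiv ℝ f) c v w = fderiv ℝ (fderiv ℝ (fun z => f (c + z))) 0 v w := by
  have hd1 : ∀ z : E, fderiv ℝ (fun z' => f (c + z')) z = fderiv ℝ f (c + z) := by
    intro z
    have h1 : HasFDerivAt (fun z' : E => c + z')
        (ContinuousLinearMap.id ℝ E) z := by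
      simpa using (hasFDerivAt_id z).const_add c
    have h2 := ((hf.differentiable two_ne_zero) (c + z)).hasFDerivAt.comp z h1
    simpa [Function.comp_def] using h2.fderiv
  have hder : ContDiff ℝ 1 (fderiv ℝ f) := hf.fderiv_right (le_refl _)
  have h3 : fderiv ℝ (fderiv ℝ (fun z => f (c + z))) 0
      = fderiv ℝ (fun z : E => fderiv ℝ f (c + z)) 0 := by
    congr 1
    exact funext hd1
  have h4 : HasFDerivAt (fun z : E => fderiv ℝ f (c + z))
      (fderiv ℝ (fderiv ℝ f) (c + 0)) 0 := by
    have h1 : HasFDerivAt (fun z' : E => c + z')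
        (ContinuousLinearMap.id ℝ E) 0 := by
      simpa using (hasFDerivAt_id (0 : E)).const_add c
    have h2 := ((hder.differentiable one_ne_zero) (c + 0)).hasFDerivAt.comp 0 h1
    simpa [Function.comp_def] using h2
  rw [h3, h4.fderiv]
  simp

private lemma real_second (g : ℝ → ℝ) (hg : ContDiff ℝ 2 g) :
    fderiv ℝ (fderiv ℝ g) 0 1 1 = deriv (deriv g) 0 := by
  have hder : ContDiff ℝ 1 (fderiv ℝ g) := hg.fderiv_right (le_refl _)
  have h1 : deriv g = fun t => fderiv ℝ g t 1 := by
    funext t; exact (fderiv_apply_one_eq_deriv).symm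
  have e : ((ℝ →L[ℝ] ℝ) →L[ℝ] ℝ) := ContinuousLinearMap.apply ℝ ℝ (1 : ℝ)
  have h2 : HasFDerivAt (fun t => fderiv ℝ g t 1)
      ((ContinuousLinearMap.apply ℝ ℝ (1 : ℝ)).comp (fderiv ℝ (fderiv ℝ g) 0)) 0 :=
    (ContinuousLinearMap.apply ℝ ℝ (1 : ℝ)).hasFDerivAt.comp 0
      ((hder.differentiable one_ne_zero) 0).hasFDerivAt
  rw [← fderiv_apply_one_eq_deriv, h1, h2.fderiv]
  simp

/-- second derivative along a line -/
private lemma secondDeriv_line {E : Type*} [NormedAddCommGroup E] [NormedSpace ℝ E]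
    (f : E → ℝ) (hf : ContDiff ℝ 2 f) (c v : E) :
    fderiv ℝ (fderiv ℝ f) c v v = deriv (deriv (fun t : ℝ => f (c + t • v))) 0 := by
  set fs : E → ℝ := fun z => f (c + z) with hfs
  have hfsC : ContDiff ℝ 2 fs := hf.comp (contDiff_const.add contDiff_id)
  set L : ℝ →L[ℝ] E := (ContinuousLinearMap.id ℝ ℝ).smulRight v with hL
  have hLt : ∀ t : ℝ, L t = t • v := by intro t; simp [hL]
  have hcomp : (fun t : ℝ => f (c + t • v)) = fs ∘ L := by
    funext t; simp [hfs, hLt]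
  have hG : ContDiff ℝ 2 (fs ∘ L) := hfsC.comp L.contDiff
  have key : iteratedFDeriv ℝ 2 (fs ∘ L) 0 =
      (iteratedFDeriv ℝ 2 fs (L 0)).compContinuousLinearMap fun _ => L :=
    L.iteratedFDeriv_comp_right hfsC 0 le_rfl
  have key2 : fderiv ℝ (fderiv ℝ (fs ∘ L)) 0 1 1 = fderiv ℝ (fderiv ℝ fs) 0 v v := by
    have e1 : fderiv ℝ (fderiv ℝ (fs ∘ L)) 0 1 1
        = iteratedFDeriv ℝ 2 (fs ∘ L) 0 ![1, 1] := by
      rw [iteratedFDeriv_two_apply]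
      rfl
    have e2 : fderiv ℝ (fderiv ℝ fs) 0 v v
        = iteratedFDeriv ℝ 2 fs 0 ![v, v] := by
      rw [iteratedFDeriv_two_apply]
      rfl
    rw [e1, e2, key]
    rw [ContinuousMultilinearMap.compContinuousLinearMap_apply]
    have : L 0 = 0 := by simp
    rw [this]
    congr 1
    funext i
    fin_cases i <;> simp [hLt]
  rw [shift2 f hf c v v, ← hfs, ← key2, hcomp, real_second _ hG]

/-- The second derivative of the augmented Hamiltonian `H − J^ξ`,
`ξ = (a₃/2, ξ₂)`, at `z_e = (0, 0, C, 0)` on the `z₁`-plane is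
`2(a₁ − a₃/2 + C b₁) x² + 2(a₁ − a₃/2 − C b₁) y²` in the direction `(x + iy, 0, 0, 0)`,
exhibiting the eigenvalues `λ₁⁺ = a₁ − a₃/2 + C b₁` and `λ₁⁻ = a₁ − a₃/2 − C b₁`. -/
theorem stmt_17 (h : (Fin 6 → ℝ) → ℝ) (hC2 : ContDiff ℝ 2 h) (C ξ₂ : ℝ)
    (a₁ a₃ b₁ : ℝ)
    (ha₁ : a₁ = fderiv ℝ h ![0, 0, C ^ 2, 0, 0, 0] (Pi.single (0 : Fin 6) (1 : ℝ)))
    (ha₃ : a₃ = fderiv ℝ h ![0, 0, C ^ 2, 0, 0, 0] (Pi.single (2 : Fin 6) (1 : ℝ)))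
    (hb₁ : b₁ = fderiv ℝ h ![0, 0, C ^ 2, 0, 0, 0] (Pi.single (4 : Fin 6) (1 : ℝ))) :
    ∀ x y : ℝ,
      fderiv ℝ (fderiv ℝ (fun z : Fin 4 → ℂ =>
          h ![Complex.normSq (z 0), Complex.normSq (z 1), Complex.normSq (z 2),
              Complex.normSq (z 3), ((z 0) ^ 2 * (starRingEnd ℂ) (z 2)).re,
              ((z 1) ^ 2 * (starRingEnd ℂ) (z 3)).re] -
          ((a₃ / 2) * (Complex.normSq (z 0) + 2 * Complex.normSq (z 2)) +
           ξ₂ * (Complex.normSq (z 1) + 2 * Complex.normSq (z 3)))))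
        ![0, 0, (C : ℂ), 0]
        ![(x : ℂ) + (y : ℂ) * Complex.I, 0, 0, 0]
        ![(x : ℂ) + (y : ℂ) * Complex.I, 0, 0, 0] =
      2 * (a₁ - a₃ / 2 + C * b₁) * x ^ 2 + 2 * (a₁ - a₃ / 2 - C * b₁) * y ^ 2 := by
  intro x y
  -- notation
  set F : (Fin 4 → ℂ) → ℝ := fun z : Fin 4 → ℂ =>
          h ![Complex.normSq (z 0), Complex.normSq (z 1), Complex.normSq (z 2),
              Complex.normSq (z 3), ((z 0) ^ 2 * (starRingEnd ℂ) (z 2)).re,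
              ((z 1) ^ 2 * (starRingEnd ℂ) (z 3)).re] -
          ((a₃ / 2) * (Complex.normSq (z 0) + 2 * Complex.normSq (z 2)) +
           ξ₂ * (Complex.normSq (z 1) + 2 * Complex.normSq (z 3))) with hF
  have hnsq : ∀ (j : Fin 4), ContDiff ℝ 2 fun z : Fin 4 → ℂ => Complex.normSq (z j) :=
    fun j => normSq_contDiff.comp (proj_contDiff j)
  have hre : ∀ (j k : Fin 4), ContDiff ℝ 2 fun z : Fin 4 → ℂ =>
      ((z j) ^ 2 * (starRingEnd ℂ) (z k)).re := by
    intro j k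
    exact Complex.reCLM.contDiff.comp
      (((proj_contDiff j).pow 2).mul (Complex.conjCLE.contDiff.comp (proj_contDiff k)))
  have hFc : ContDiff ℝ 2 F := by
    rw [hF]
    refine ContDiff.sub (hC2.comp ?_) ?_
    · apply contDiff_pi.2
      intro i
      fin_cases i
      · exact hnsq 0
      · exact hnsq 1
      · exact hnsq 2
      · exact hnsq 3
      · exact hre 0 2
      · exact hre 1 3
    · exact ((contDiff_const.mul ((hnsq 0).add (contDiff_const.mul (hnsq 2)))).add
        (contDiff_const.mul ((hnsq 1).add (contDiff_const.mul (hnsq 3)))))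
  rw [secondDeriv_line F hFc]
  -- now reduce to a 1D computation
  set c6 : Fin 6 → ℝ := ![0, 0, C ^ 2, 0, 0, 0] with hc6
  set w : Fin 6 → ℝ := ![x ^ 2 + y ^ 2, 0, 0, 0, C * (x ^ 2 - y ^ 2), 0] with hw
  set ψ : ℝ → ℝ := fun s => h (c6 + s • w) with hψdef
  set k₁ : ℝ := a₃ / 2 * (x ^ 2 + y ^ 2) with hk₁
  have hGeq : (fun t : ℝ => F (![0, 0, (C : ℂ), 0] + t • ![(x : ℂ) + (y : ℂ) * Complex.I, 0, 0, 0]))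
      = fun t : ℝ => ψ (t ^ 2) - k₁ * t ^ 2 - a₃ * C ^ 2 := by
    funext t
    simp only [hF, hψdef]
    have hz0 : (![0, 0, (C : ℂ), 0] + t • ![(x : ℂ) + (y : ℂ) * Complex.I, 0, 0, 0]) 0
        = (t : ℂ) * ((x : ℂ) + (y : ℂ) * Complex.I) := by
      simp [Complex.real_smul]
      ring
    have hz1 : (![0, 0, (C : ℂ), 0] + t • ![(x : ℂ) + (y : ℂ) * Complex.I, 0, 0, 0]) 1 = 0 := by
      simp
    have hz2 : (![0, 0, (C : ℂ), 0] + t • ![(x : ℂ) + (y : ℂ) * Complex.I, 0, 0, 0]) 2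
        = (C : ℂ) := by simp
    have hz3 : (![0, 0, (C : ℂ), 0] + t • ![(x : ℂ) + (y : ℂ) * Complex.I, 0, 0, 0]) 3 = 0 := by
      simp
    simp only [hz0, hz1, hz2, hz3]
    have hv : ![Complex.normSq ((t : ℂ) * ((x : ℂ) + (y : ℂ) * Complex.I)),
        Complex.normSq (0 : ℂ), Complex.normSq ((C : ℂ)), Complex.normSq (0 : ℂ),
        (((t : ℂ) * ((x : ℂ) + (y : ℂ) * Complex.I)) ^ 2 * (starRingEnd ℂ) ((C : ℂ))).re,
        ((0 : ℂ) ^ 2 * (starRingEnd ℂ) (0 : ℂ)).re] = c6 + (t ^ 2) • w := by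
      funext i
      fin_cases i <;>
        simp [hc6, hw, cons_val_five, Complex.normSq_apply, Complex.mul_re, Complex.mul_im,
          Complex.add_re, Complex.add_im, Complex.ofReal_re, Complex.ofReal_im,
          Complex.conj_re, Complex.conj_im, pow_two] <;> ring
    rw [hv]
    have : Complex.normSq ((t : ℂ) * ((x : ℂ) + (y : ℂ) * Complex.I)) = t ^ 2 * (x ^ 2 + y ^ 2) := by
      simp [Complex.normSq_apply, Complex.mul_re, Complex.mul_im, pow_two]
      ring
    rw [this]
    have hnsqC : Complex.normSq ((C : ℂ)) = C ^ 2 := by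
      simp [Complex.normSq_apply, pow_two]
    rw [hnsqC]
    simp [hk₁]
    ring
  rw [hGeq]
  -- compute the derivatives of the explicit 1D function
  have hψC : ContDiff ℝ 2 ψ := by
    rw [hψdef]
    exact hC2.comp (contDiff_const.add (contDiff_id.smul contDiff_const))
  have hψd : ∀ s : ℝ, HasDerivAt ψ (deriv ψ s) s :=
    fun s => ((hψC.differentiable two_ne_zero) s).hasDerivAt
  have hpow : ∀ t : ℝ, HasDerivAt (fun s : ℝ => s ^ 2) (2 * t) t := by
    intro t; simpa using hasDerivAt_pow 2 t
  have hG' : ∀ t : ℝ, HasDerivAt (fun t : ℝ => ψ (t ^ 2) - k₁ * t ^ 2 - a₃ * C ^ 2)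
      (deriv ψ (t ^ 2) * (2 * t) - k₁ * (2 * t)) t := by
    intro t
    exact (((hψd (t ^ 2)).comp t (hpow t)).sub ((hpow t).const_mul k₁)).sub_const _
  have hderivG : deriv (fun t : ℝ => ψ (t ^ 2) - k₁ * t ^ 2 - a₃ * C ^ 2)
      = fun t => deriv ψ (t ^ 2) * (2 * t) - k₁ * (2 * t) := funext fun t => (hG' t).deriv
  rw [hderivG]
  -- second derivative at 0
  have hψ' : ContDiff ℝ 1 (deriv ψ) := by
    have := hψC.fderiv_right (m := 1) (le_refl _)
    have heq : deriv ψ = fun t => fderiv ℝ ψ t 1 := by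
      funext t; exact (fderiv_apply_one_eq_deriv).symm
    rw [heq]
    exact (ContinuousLinearMap.apply ℝ ℝ (1 : ℝ)).contDiff.comp this
  have hη : HasDerivAt (fun t : ℝ => deriv ψ (t ^ 2))
      (deriv (deriv ψ) (0 ^ 2) * (2 * 0)) 0 :=
    by have := (((hψ'.differentiable one_ne_zero) (0 ^ 2)).hasDerivAt).comp 0 (hpow 0); exact this
  have hlin : HasDerivAt (fun t : ℝ => k₁ * (2 * t)) (k₁ * (2 * 1)) 0 :=
    ((hasDerivAt_id (0 : ℝ)).const_mul 2).const_mul k₁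
  have h2nd : HasDerivAt (fun t : ℝ => deriv ψ (t ^ 2) * (2 * t) - k₁ * (2 * t))
      ((deriv (deriv ψ) (0 ^ 2) * (2 * 0)) * (2 * 0) + deriv ψ (0 ^ 2) * 2 - k₁ * (2 * 1)) 0 := by
    have := hη.mul (((hasDerivAt_id (0 : ℝ)).const_mul 2))
    exact (this.sub hlin).congr_deriv (by ring)
  rw [h2nd.deriv]
  -- evaluate deriv ψ 0
  have hψ0 : HasDerivAt ψ (fderiv ℝ h c6 w) 0 := by
    have h1 : HasDerivAt (fun s : ℝ => c6 + s • w) w 0 := by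
      simpa using ((hasDerivAt_id (0 : ℝ)).smul_const w).const_add c6
    have h2 := (((hC2.differentiable two_ne_zero) (c6 + (0 : ℝ) • w)).hasFDerivAt).comp_hasDerivAt 0 h1
    simpa [hψdef, Function.comp_def] using h2
  have hd0 : deriv ψ (0 ^ 2) = fderiv ℝ h c6 w := by
    rw [show ((0 : ℝ) ^ 2) = (0 : ℝ) by norm_num]
    exact hψ0.deriv
  rw [hd0]
  -- linearity of the derivative
  have hwlin : w = (x ^ 2 + y ^ 2) • (Pi.single (0 : Fin 6) (1 : ℝ) : Fin 6 → ℝ)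
      + (C * (x ^ 2 - y ^ 2)) • (Pi.single (4 : Fin 6) (1 : ℝ) : Fin 6 → ℝ) := by
    funext i
    fin_cases i <;> simp [hw, cons_val_five, Pi.single_apply]
  have hval : fderiv ℝ h c6 w = (x ^ 2 + y ^ 2) * a₁ + (C * (x ^ 2 - y ^ 2)) * b₁ := by
    rw [hwlin, map_add, map_smul, map_smul, ha₁, hb₁, hc6]
    simp [smul_eq_mul]
  rw [hval, hk₁]
  ring
end
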